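/- arXiv:2404.09639 — 2 statements merged into one kernel-verified Lean document; each statement's English description precedes it below -/
import Mathlib

section
/- Let X, Y be random variables on 𝔽₂ⁿ, let X₁, X₂ be independent copies of X and Y₁, Y₂ independent copies of Y, with X₁, X₂, Y₁, Y₂ mutually independent. Set T = X₁+Y₁, T̄ = X₂+Y₂, V = X₁+Y₂, V̄ = X₂+Y₁, W = X₁+X₂, W̄ = Y₁+Y₂, S = X₁+X₂+Y₁+Y₂, I₁ = I(T : V | S), I₂ = I(T : W | S). Then d[(T;V) | (W̄,S)] + d[(V;W) | (T̄,S)] + d[(W;T) | (V̄,S)] ≤ 3·I₁ + 6·I₂. -/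
open scoped BigOperators Pointwise Classical

noncomputable section

/-- `𝔽₂ⁿ`, the `n`-dimensional vector space over the field with two elements. -/
abbrev F2 (n : ℕ) : Type := Fin n → ZMod 2

/-- `f` is a probability distribution on the finite type `α`. -/
def IsDist {α : Type*} [Fintype α] (f : α → ℝ) : Prop :=
  (∀ x, 0 ≤ f x) ∧ ∑ x, f x = 1

/-- Shannon entropy (base 2) of a distribution on a finite type. -/
def ent {α : Type*} [Fintype α] (f : α → ℝ) : ℝ :=
  ∑ x, -(f x * Real.logb 2 (f x))

/-- Distribution of `X + Y` for independent `X ∼ f`, `Y ∼ g`. -/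
def addDist {α : Type*} [Fintype α] [AddGroup α] (f g : α → ℝ) : α → ℝ :=
  fun s => ∑ x, f x * g (s - x)

/-- Distribution of `X - Y` for independent `X ∼ f`, `Y ∼ g`. -/
def subDist {α : Type*} [Fintype α] [AddGroup α] (f g : α → ℝ) : α → ℝ :=
  fun s => ∑ x, f x * g (x - s)

/-- Entropic Ruzsa distance `d[X;Y] = H(X' + Y') - (H(X) + H(Y))/2` (in `𝔽₂ⁿ`
addition coincides with subtraction). -/
def rdist {α : Type*} [Fintype α] [AddGroup α] (f g : α → ℝ) : ℝ :=
  ent (addDist f g) - (ent f + ent g) / 2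

/-- Entropic Ruzsa distance `d[X;Y] = H(X' - Y') - (H(X) + H(Y))/2` in a general group. -/
def rdistSub {α : Type*} [Fintype α] [AddGroup α] (f g : α → ℝ) : ℝ :=
  ent (subDist f g) - (ent f + ent g) / 2

/-- Pushforward of a distribution along a map. -/
def pmap {α β : Type*} [Fintype α] (h : α → β) (π : α → ℝ) : β → ℝ :=
  fun b => ∑ a, if h a = b then π a else 0

/-- First marginal of a joint distribution. -/
def margFst {α γ : Type*} [Fintype γ] (π : α × γ → ℝ) : α → ℝ :=
  fun a => ∑ z, π (a, z)

/-- Second marginal of a joint distribution. -/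
def margSnd {α γ : Type*} [Fintype α] (π : α × γ → ℝ) : γ → ℝ :=
  fun z => ∑ a, π (a, z)

/-- Conditional distribution of the first coordinate given that the second equals `z`. -/
def condDist {α γ : Type*} [Fintype α] (π : α × γ → ℝ) (z : γ) : α → ℝ :=
  fun a => π (a, z) / margSnd π z

/-- Conditional entropy `H(X | Z) = E_{z ∼ Z} H(X |_{Z = z})`. -/
def condEnt {α γ : Type*} [Fintype α] [Fintype γ] (π : α × γ → ℝ) : ℝ :=
  ∑ z, margSnd π z * ent (condDist π z)

/-- Mutual information `I(X : Y) = H(X) + H(Y) - H(X, Y)`. -/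
def mutInfo {α β : Type*} [Fintype α] [Fintype β] (π : α × β → ℝ) : ℝ :=
  ent (margFst π) + ent (margSnd π) - ent π

/-- Conditional mutual information `I(X : Y | Z) = E_{z ∼ Z} I(X|_{Z=z} : Y|_{Z=z})`. -/
def condMutInfo {α β γ : Type*} [Fintype α] [Fintype β] [Fintype γ]
    (π : (α × β) × γ → ℝ) : ℝ :=
  ∑ z, margSnd π z * mutInfo (condDist π z)

/-- Conditioned Ruzsa distance `d[(X;Y) | Z] = E_{z ∼ Z} d[X|_{Z=z} ; Y|_{Z=z}]`, where
inside the expectation the two conditioned variables are treated as independent. -/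
def condRdist {α γ : Type*} [Fintype α] [Fintype γ] [AddGroup α]
    (π : (α × α) × γ → ℝ) : ℝ :=
  ∑ z, margSnd π z * rdist (pmap Prod.fst (condDist π z)) (pmap Prod.snd (condDist π z))

/-- Doubly conditioned Ruzsa distance `d[X | Z ; Y | W] = E_{z,w} d[X|_{Z=z} ; Y|_{W=w}]`
for `(X,Z)` independent of `(Y,W)`. -/
def condRdist2 {α γ δ : Type*} [Fintype α] [Fintype γ] [Fintype δ] [AddGroup α]
    (π : α × γ → ℝ) (ρ : α × δ → ℝ) : ℝ :=
  ∑ z, ∑ w, margSnd π z * margSnd ρ w * rdist (condDist π z) (condDist ρ w)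

/-- The uniform distribution on a finite set `A`. -/
def unifFin {α : Type*} [Fintype α] (A : Finset α) : α → ℝ :=
  fun x => if x ∈ A then (A.card : ℝ)⁻¹ else 0

/-- The uniform distribution on a set `S`. -/
def unifSet {α : Type*} [Fintype α] (S : Set α) : α → ℝ :=
  fun x => if x ∈ S then (Nat.card S : ℝ)⁻¹ else 0

/-- Kullback–Leibler divergence (base-2 logarithm), with value `⊤` if the support of `f`
is not contained in the support of `g`. -/
def KL {α : Type*} [Fintype α] (f g : α → ℝ) : EReal :=
  if ∀ x, g x = 0 → f x = 0 then
    ((∑ x, f x * Real.logb 2 (f x / g x) : ℝ) : EReal)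
  else ⊤

/-- `τ⁻(X) := inf_T D_KL(X ‖ U_A + T)`, the infimum over all `𝔽₂ⁿ`-valued random
variables `T` independent of `U_A`. -/
def tauMinus {n : ℕ} (A : Finset (F2 n)) (f : F2 n → ℝ) : EReal :=
  ⨅ t : {t : F2 n → ℝ // IsDist t}, KL f (addDist (unifFin A) t.1)

/-- `τ⁺(X) := τ⁻(X) + H(X) - H(U_A)`. -/
def tauPlus {n : ℕ} (A : Finset (F2 n)) (f : F2 n → ℝ) : EReal :=
  tauMinus A f + ((ent f - ent (unifFin A) : ℝ) : EReal)

/-- The sample space for `(X₁, X₂, Y₁, Y₂)`. -/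
abbrev Quad (n : ℕ) : Type := (F2 n × F2 n) × (F2 n × F2 n)

/-- Joint distribution of `(X₁, X₂, Y₁, Y₂)` where `X₁, X₂ ∼ f` and `Y₁, Y₂ ∼ g`
are mutually independent. -/
def jointXY {n : ℕ} (f g : F2 n → ℝ) : Quad n → ℝ :=
  fun q => f q.1.1 * f q.1.2 * g q.2.1 * g q.2.2

/-- `T = X₁ + Y₁`. -/
def Tv {n : ℕ} (q : Quad n) : F2 n := q.1.1 + q.2.1
/-- `T̄ = X₂ + Y₂`. -/
def Tb {n : ℕ} (q : Quad n) : F2 n := q.1.2 + q.2.2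
/-- `V = X₁ + Y₂`. -/
def Vv {n : ℕ} (q : Quad n) : F2 n := q.1.1 + q.2.2
/-- `V̄ = X₂ + Y₁`. -/
def Vb {n : ℕ} (q : Quad n) : F2 n := q.1.2 + q.2.1
/-- `W = X₁ + X₂`. -/
def Wv {n : ℕ} (q : Quad n) : F2 n := q.1.1 + q.1.2
/-- `W̄ = Y₁ + Y₂`. -/
def Wb {n : ℕ} (q : Quad n) : F2 n := q.2.1 + q.2.2
/-- `S = X₁ + X₂ + Y₁ + Y₂`. -/
def Sv {n : ℕ} (q : Quad n) : F2 n := q.1.1 + q.1.2 + q.2.1 + q.2.2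

/-- `I₁ = I(T : V | S)`. -/
def I1 {n : ℕ} (f g : F2 n → ℝ) : ℝ :=
  condMutInfo (pmap (fun q : Quad n => ((Tv q, Vv q), Sv q)) (jointXY f g))

/-- `I₂ = I(T : W | S)`. -/
def I2 {n : ℕ} (f g : F2 n → ℝ) : ℝ :=
  condMutInfo (pmap (fun q : Quad n => ((Tv q, Wv q), Sv q)) (jointXY f g))

set_option linter.unusedSectionVars false
set_option maxHeartbeats 1000000

-- Part 1: basic pmap / ent lemmas
section Basic
open Finset Real

variable {α β γ δ : Type*} [Fintype α] [Fintype β] [Fintype γ] [Fintype δ]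

/-- negative x log x, base 2 -/
def nphi (x : ℝ) : ℝ := -(x * Real.logb 2 x)

lemma nphi_zero : nphi 0 = 0 := by simp [nphi]

lemma ent_eq (f : α → ℝ) : ent f = ∑ x, nphi (f x) := rfl

lemma sum_pmap_mul (h : α → β) (μ : α → ℝ) (G : β → ℝ) :
    ∑ b, pmap h μ b * G b = ∑ a, μ a * G (h a) := by
  unfold pmap
  simp only [Finset.sum_mul, ite_mul, zero_mul]
  rw [Finset.sum_comm]
  refine Finset.sum_congr rfl fun a _ => ?_
  rw [Finset.sum_ite_eq]
  simp

lemma sum_pmap (h : α → β) (μ : α → ℝ) : ∑ b, pmap h μ b = ∑ a, μ a := by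
  have := sum_pmap_mul h μ (fun _ => 1)
  simpa using this

lemma pmap_nonneg {h : α → β} {μ : α → ℝ} (hμ : ∀ a, 0 ≤ μ a) (b : β) :
    0 ≤ pmap h μ b := by
  refine Finset.sum_nonneg fun a _ => ?_
  split <;> simp [hμ a]

lemma isDist_pmap {μ : α → ℝ} (hμ : IsDist μ) (h : α → β) : IsDist (pmap h μ) :=
  ⟨pmap_nonneg hμ.1, by rw [sum_pmap]; exact hμ.2⟩

lemma pmap_comp (h : β → γ) (h' : α → β) (μ : α → ℝ) :
    pmap h (pmap h' μ) = pmap (fun a => h (h' a)) μ := by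
  funext c
  have h1 : pmap h (pmap h' μ) c = ∑ b, pmap h' μ b * (if h b = c then 1 else 0) := by
    unfold pmap; exact Finset.sum_congr rfl fun b _ => by split <;> simp
  rw [h1, sum_pmap_mul]
  unfold pmap
  exact Finset.sum_congr rfl fun a _ => by split <;> simp

lemma pmap_le {h : α → β} {μ : α → ℝ} (hμ : ∀ a, 0 ≤ μ a) (a : α) :
    μ a ≤ pmap h μ (h a) := by
  unfold pmap
  refine Finset.single_le_sum (f := fun a' => if h a' = h a then μ a' else 0)
    (fun a' _ => by split <;> simp [hμ a']) (Finset.mem_univ a) |>.trans_eq' (by simp)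

/-- pushforward only depends on values on the support -/
lemma pmap_congr_ae {h h' : α → β} {μ : α → ℝ}
    (hae : ∀ a, μ a ≠ 0 → h a = h' a) : pmap h μ = pmap h' μ := by
  funext b
  refine Finset.sum_congr rfl fun a _ => ?_
  by_cases hz : μ a = 0
  · simp [hz]
  · rw [hae a hz]

/-- entropy is invariant under injective pushforward -/
lemma ent_pmap_inj {h : α → β} (hinj : Function.Injective h) (μ : α → ℝ) :
    ent (pmap h μ) = ent μ := by
  rw [ent_eq, ent_eq]
  have key : ∀ a : α, pmap h μ (h a) = μ a := by
    intro a
    unfold pmap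
    rw [Finset.sum_eq_single a (fun a' _ hne => by
      simp only [ite_eq_right_iff]; intro he; exact absurd (hinj he) hne)]
    · simp
    · simp
  have him : ∑ b ∈ Finset.univ.image h, nphi (pmap h μ b) = ∑ a, nphi (μ a) := by
    rw [Finset.sum_image (fun a _ a' _ he => hinj he)]
    exact Finset.sum_congr rfl fun a _ => by rw [key]
  rw [← him]
  symm
  refine Finset.sum_subset (Finset.subset_univ _) fun b _ hb => ?_
  have : pmap h μ b = 0 := by
    unfold pmap
    refine Finset.sum_eq_zero fun a _ => ?_
    have : h a ≠ b := fun he => hb (Finset.mem_image.2 ⟨a, Finset.mem_univ a, he⟩)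
    simp [this]
  rw [this, nphi_zero]

lemma pmap_equiv (e : α ≃ β) (μ : α → ℝ) : pmap (⇑e) μ = fun b => μ (e.symm b) := by
  funext b
  unfold pmap
  rw [Finset.sum_eq_single (e.symm b)]
  · simp
  · intro a _ hne
    have : e a ≠ b := fun he => hne (by simp [← he])
    simp [this]
  · simp

lemma ent_nonneg {μ : α → ℝ} (hμ : IsDist μ) : 0 ≤ ent μ := by
  rw [ent_eq]
  refine Finset.sum_nonneg fun a _ => ?_
  rcases eq_or_lt_of_le (hμ.1 a) with h | h
  · simp [← h, nphi_zero]
  · have h1 : μ a ≤ 1 := by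
      rw [← hμ.2]
      exact Finset.single_le_sum (fun x _ => hμ.1 x) (Finset.mem_univ a)
    have : Real.logb 2 (μ a) ≤ 0 := Real.logb_nonpos (by norm_num) (le_of_lt h) h1
    unfold nphi; nlinarith

end Basic

-- Part 2: Gibbs inequality, submodularity, mixing
section Gibbs
open Finset Real

variable {α β γ δ : Type*} [Fintype α] [Fintype β] [Fintype γ] [Fintype δ]

lemma ent_eq_neg (f : α → ℝ) : ent f = -∑ x, f x * Real.logb 2 (f x) := by
  unfold ent; rw [← Finset.sum_neg_distrib]

lemma gibbs {f g : α → ℝ} (hf : ∀ x, 0 ≤ f x) (hg : ∀ x, 0 ≤ g x)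
    (habs : ∀ x, f x ≠ 0 → g x ≠ 0) (hfs : ∑ x, f x = 1) (hgs : ∑ x, g x ≤ 1) :
    ∑ x, f x * Real.logb 2 (g x / f x) ≤ 0 := by
  have hlog2 : (0:ℝ) < Real.log 2 := Real.log_pos (by norm_num)
  have step : ∀ x, f x * Real.logb 2 (g x / f x) ≤ (g x - f x) / Real.log 2 := by
    intro x
    by_cases hfx : f x = 0
    · simp only [hfx, zero_mul, sub_zero]
      exact div_nonneg (hg x) hlog2.le
    · have hfx' : 0 < f x := lt_of_le_of_ne (hf x) (Ne.symm hfx)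
      have hgx' : 0 < g x := lt_of_le_of_ne (hg x) (Ne.symm (habs x hfx))
      have hq : 0 < g x / f x := div_pos hgx' hfx'
      have hlog : Real.log (g x / f x) ≤ g x / f x - 1 := Real.log_le_sub_one_of_pos hq
      rw [Real.logb, div_eq_mul_inv (Real.log _)]
      rw [div_eq_mul_inv]
      have h2 : f x * Real.log (g x / f x) ≤ g x - f x := by
        calc f x * Real.log (g x / f x) ≤ f x * (g x / f x - 1) := by
              exact mul_le_mul_of_nonneg_left hlog (hf x)
          _ = g x - f x := by field_simp
      calc f x * (Real.log (g x / f x) * (Real.log 2)⁻¹)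
          = f x * Real.log (g x / f x) * (Real.log 2)⁻¹ := by ring
        _ ≤ (g x - f x) * (Real.log 2)⁻¹ := by
            exact mul_le_mul_of_nonneg_right h2 (by positivity)
  calc ∑ x, f x * Real.logb 2 (g x / f x) ≤ ∑ x, (g x - f x) / Real.log 2 :=
        Finset.sum_le_sum fun x _ => step x
    _ = (∑ x, g x - 1) / Real.log 2 := by
        rw [← Finset.sum_div, Finset.sum_sub_distrib, hfs]
    _ ≤ 0 := by
        apply div_nonpos_of_nonpos_of_nonneg
        · linarith
        · exact le_of_lt hlog2

lemma ent_le_neg_sum_log {f g : α → ℝ} (hf : ∀ x, 0 ≤ f x) (hg : ∀ x, 0 ≤ g x)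
    (habs : ∀ x, f x ≠ 0 → g x ≠ 0) (hfs : ∑ x, f x = 1) (hgs : ∑ x, g x ≤ 1) :
    ent f ≤ -∑ x, f x * Real.logb 2 (g x) := by
  have h0 := gibbs hf hg habs hfs hgs
  have hexp : ∀ x, f x * Real.logb 2 (g x / f x)
      = f x * Real.logb 2 (g x) - f x * Real.logb 2 (f x) := by
    intro x
    by_cases hfx : f x = 0
    · simp [hfx]
    · rw [Real.logb_div (habs x hfx) hfx]; ring
  rw [Finset.sum_congr rfl (fun x _ => hexp x), Finset.sum_sub_distrib] at h0
  rw [ent_eq_neg]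
  linarith

/-- mixing: entropy of a mixture is at least the mixture of entropies -/
lemma ent_mix {ι : Type*} [Fintype ι] {w : ι → ℝ} {σ : ι → α → ℝ}
    (hw : ∀ d, 0 ≤ w d) (hσ : ∀ d u, 0 ≤ σ d u)
    (hσs : ∀ d, w d ≠ 0 → ∑ u, σ d u = 1) (hws : ∑ d, w d = 1) :
    ∑ d, w d * ent (σ d) ≤ ent (fun u => ∑ d, w d * σ d u) := by
  set L : α → ℝ := fun u => ∑ d, w d * σ d u with hL
  have hLnn : ∀ u, 0 ≤ L u := fun u =>
    Finset.sum_nonneg fun d _ => mul_nonneg (hw d) (hσ d u)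
  have hLs : ∑ u, L u = 1 := by
    rw [hL]
    dsimp only
    rw [Finset.sum_comm]
    calc ∑ d, ∑ u, w d * σ d u = ∑ d, w d * ∑ u, σ d u := by
          exact Finset.sum_congr rfl fun d _ => (Finset.mul_sum _ _ _).symm
      _ = ∑ d, w d := by
          refine Finset.sum_congr rfl fun d _ => ?_
          by_cases hwd : w d = 0
          · simp [hwd]
          · rw [hσs d hwd, mul_one]
      _ = 1 := hws
  have key : ∀ d, w d ≠ 0 → ent (σ d) ≤ -∑ u, σ d u * Real.logb 2 (L u) := by
    intro d hwd
    refine ent_le_neg_sum_log (hσ d) hLnn ?_ (hσs d hwd) (le_of_eq hLs)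
    intro u hσu
    have h1 : 0 < w d * σ d u :=
      mul_pos (lt_of_le_of_ne (hw d) (Ne.symm hwd)) (lt_of_le_of_ne (hσ d u) (Ne.symm hσu))
    have h2 : w d * σ d u ≤ L u :=
      Finset.single_le_sum (f := fun d' => w d' * σ d' u)
        (fun d' _ => mul_nonneg (hw d') (hσ d' u)) (Finset.mem_univ d)
    exact ne_of_gt (lt_of_lt_of_le h1 h2)
  calc ∑ d, w d * ent (σ d) ≤ ∑ d, w d * (-∑ u, σ d u * Real.logb 2 (L u)) := by
        refine Finset.sum_le_sum fun d _ => ?_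
        by_cases hwd : w d = 0
        · simp [hwd]
        · exact mul_le_mul_of_nonneg_left (key d hwd) (hw d)
    _ = -∑ d, ∑ u, w d * σ d u * Real.logb 2 (L u) := by
        rw [← Finset.sum_neg_distrib]
        refine Finset.sum_congr rfl fun d _ => ?_
        rw [mul_neg, Finset.mul_sum]
        congr 1
        exact Finset.sum_congr rfl fun u _ => by ring
    _ = -∑ u, L u * Real.logb 2 (L u) := by
        rw [Finset.sum_comm]
        congr 1
        refine Finset.sum_congr rfl fun u _ => ?_
        rw [hL]
        dsimp only
        rw [Finset.sum_mul]
    _ = ent L := (ent_eq_neg L).symm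

end Gibbs

-- Part 3: submodularity with common function
section Submod
open Finset Real

variable {α β γ δ : Type*} [Fintype α] [Fintype β] [Fintype γ] [Fintype δ]

lemma pmap_apply_exists {h : α → β} {μ : α → ℝ} {b : β} (hne : pmap h μ b ≠ 0) :
    ∃ a, μ a ≠ 0 ∧ h a = b := by
  obtain ⟨a, _, ha⟩ := Finset.exists_ne_zero_of_sum_ne_zero hne
  refine ⟨a, ?_, ?_⟩
  · intro hz; apply ha; simp [hz]
  · by_contra hc; apply ha; simp [hc]

lemma pmap_fst_apply (F : α × β → ℝ) (a : α) :
    pmap Prod.fst F a = ∑ b, F (a, b) := by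
  unfold pmap
  rw [Fintype.sum_prod_type]
  rw [Finset.sum_eq_single a]
  · simp
  · intro a' _ hne
    refine Finset.sum_eq_zero fun b _ => ?_
    simp [hne]
  · simp

lemma pmap_snd_apply (F : α × β → ℝ) (b : β) :
    pmap Prod.snd F b = ∑ a, F (a, b) := by
  unfold pmap
  rw [Fintype.sum_prod_type_right]
  rw [Finset.sum_eq_single b]
  · simp
  · intro b' _ hne
    refine Finset.sum_eq_zero fun a _ => ?_
    simp [hne]
  · simp

/-- Submodularity: if `W = w₁ ∘ X = w₂ ∘ Y` a.e., then `H(W) + H(X,Y) ≤ H(X) + H(Y)`. -/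
lemma submod_fn {Ω : Type*} [Fintype Ω] {μ : Ω → ℝ} (hμ : IsDist μ)
    (X : Ω → α) (Y : Ω → β) (w₁ : α → γ) (w₂ : β → γ)
    (hae : ∀ ω, μ ω ≠ 0 → w₁ (X ω) = w₂ (Y ω)) :
    ent (pmap (fun ω => w₁ (X ω)) μ) + ent (pmap (fun ω => (X ω, Y ω)) μ)
      ≤ ent (pmap X μ) + ent (pmap Y μ) := by
  set pX := pmap X μ with hpX
  set pY := pmap Y μ with hpY
  set pW := pmap (fun ω => w₁ (X ω)) μ with hpW
  set F := pmap (fun ω => (X ω, Y ω)) μ with hF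
  have hXnn : ∀ a, 0 ≤ pX a := pmap_nonneg hμ.1
  have hYnn : ∀ b, 0 ≤ pY b := pmap_nonneg hμ.1
  have hWnn : ∀ c, 0 ≤ pW c := pmap_nonneg hμ.1
  have hFnn : ∀ p, 0 ≤ F p := pmap_nonneg hμ.1
  have hFs : ∑ p, F p = 1 := by rw [hF, sum_pmap]; exact hμ.2
  -- pW = pmap w₁ pX  and  pW = pmap w₂ pY
  have hWX : pW = pmap w₁ pX := by rw [hpW, hpX, pmap_comp]
  have hWY : pW = pmap w₂ pY := by
    rw [hpW, hpY, pmap_comp]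
    exact pmap_congr_ae hae
  -- marginals of F
  have hmargX : ∀ a, ∑ b, F (a, b) = pX a := by
    intro a
    rw [← pmap_fst_apply, hF, pmap_comp, hpX]
  have hmargY : ∀ b, ∑ a, F (a, b) = pY b := by
    intro b
    rw [← pmap_snd_apply, hF, pmap_comp, hpY]
  -- the comparison distribution
  set g : α × β → ℝ := fun p =>
    if w₁ p.1 = w₂ p.2 then pX p.1 * pY p.2 / pW (w₁ p.1) else 0 with hg
  have hgnn : ∀ p, 0 ≤ g p := by
    intro p; rw [hg]; dsimp only
    split
    · exact div_nonneg (mul_nonneg (hXnn _) (hYnn _)) (hWnn _)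
    · exact le_refl 0
  have habs : ∀ p, F p ≠ 0 → g p ≠ 0 := by
    intro p hFp
    obtain ⟨ω, hω, hXY⟩ := pmap_apply_exists (hF ▸ hFp)
    have h1 : w₁ p.1 = w₂ p.2 := by
      have := hae ω hω
      rw [Prod.ext_iff] at hXY
      rw [← hXY.1, ← hXY.2]; exact this
    have hFpos : 0 < F p := lt_of_le_of_ne (hFnn p) (Ne.symm hFp)
    have hXpos : 0 < pX p.1 := by
      rw [← hmargX]
      refine lt_of_lt_of_le hFpos ?_
      refine Finset.single_le_sum (f := fun b => F (p.1, b)) (fun b _ => hFnn _) (Finset.mem_univ p.2) |>.trans_eq' ?_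
      simp
    have hYpos : 0 < pY p.2 := by
      rw [← hmargY]
      refine lt_of_lt_of_le hFpos ?_
      refine Finset.single_le_sum (f := fun a => F (a, p.2)) (fun a _ => hFnn _) (Finset.mem_univ p.1) |>.trans_eq' ?_
      simp
    have hWpos : 0 < pW (w₁ p.1) := by
      rw [hWX]
      exact lt_of_lt_of_le hXpos (pmap_le hXnn p.1)
    have : 0 < g p := by
      rw [hg]; dsimp only
      rw [if_pos h1]
      exact div_pos (mul_pos hXpos hYpos) hWpos
    exact ne_of_gt this
  have hgs : ∑ p, g p ≤ 1 := by
    have h1 : ∑ p : α × β, g p = ∑ a, pX a / pW (w₁ a) * pW (w₁ a) := by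
      rw [Fintype.sum_prod_type]
      refine Finset.sum_congr rfl fun a _ => ?_
      have h2 : ∀ b : β, g (a, b) = pX a / pW (w₁ a) * (if w₂ b = w₁ a then pY b else 0) := by
        intro b
        rw [hg]; dsimp only
        by_cases hc : w₁ a = w₂ b
        · rw [if_pos hc, if_pos hc.symm]; ring
        · rw [if_neg hc, if_neg (Ne.symm hc), mul_zero]
      rw [Finset.sum_congr rfl fun b _ => h2 b, ← Finset.mul_sum]
      congr 1
      exact (congrFun hWY (w₁ a)).symm
    rw [h1]
    calc ∑ a, pX a / pW (w₁ a) * pW (w₁ a) ≤ ∑ a, pX a := by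
          refine Finset.sum_le_sum fun a _ => ?_
          by_cases hz : pW (w₁ a) = 0
          · rw [hz]; simp [hXnn a]
          · rw [div_mul_cancel₀ _ hz]
      _ = 1 := by rw [hpX, sum_pmap]; exact hμ.2
  have main := ent_le_neg_sum_log hFnn hgnn habs hFs hgs
  have hexp : ∑ p, F p * Real.logb 2 (g p)
      = ∑ p, F p * (Real.logb 2 (pX p.1) + Real.logb 2 (pY p.2) - Real.logb 2 (pW (w₁ p.1))) := by
    refine Finset.sum_congr rfl fun p _ => ?_
    by_cases hFp : F p = 0
    · rw [hFp]; ring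
    · congr 1
      have h1 : w₁ p.1 = w₂ p.2 := by
        obtain ⟨ω, hω, hXY⟩ := pmap_apply_exists (hF ▸ hFp)
        rw [Prod.ext_iff] at hXY
        rw [← hXY.1, ← hXY.2]; exact hae ω hω
      have hFpos : 0 < F p := lt_of_le_of_ne (hFnn p) (Ne.symm hFp)
      have hXpos : 0 < pX p.1 := by
        rw [← hmargX]
        refine lt_of_lt_of_le hFpos ?_
        refine Finset.single_le_sum (f := fun b => F (p.1, b)) (fun b _ => hFnn _) (Finset.mem_univ p.2) |>.trans_eq' ?_
        simp
      have hYpos : 0 < pY p.2 := by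
        rw [← hmargY]
        refine lt_of_lt_of_le hFpos ?_
        refine Finset.single_le_sum (f := fun a => F (a, p.2)) (fun a _ => hFnn _) (Finset.mem_univ p.1) |>.trans_eq' ?_
        simp
      have hWpos : 0 < pW (w₁ p.1) := by
        rw [hWX]
        exact lt_of_lt_of_le hXpos (pmap_le hXnn p.1)
      rw [hg]; dsimp only
      rw [if_pos h1, Real.logb_div (by positivity) (ne_of_gt hWpos),
        Real.logb_mul (ne_of_gt hXpos) (ne_of_gt hYpos)]
  have hsplit : ∑ p, F p * (Real.logb 2 (pX p.1) + Real.logb 2 (pY p.2) - Real.logb 2 (pW (w₁ p.1)))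
      = -ent pX + -ent pY + ent pW := by
    have e1 : ∑ p : α × β, F p * Real.logb 2 (pX p.1) = -ent pX := by
      rw [hF, sum_pmap_mul (fun ω => (X ω, Y ω)) μ (fun p => Real.logb 2 (pX p.1))]
      rw [ent_eq_neg, neg_neg, hpX, sum_pmap_mul X μ (fun a => Real.logb 2 (pX a))]
    have e2 : ∑ p : α × β, F p * Real.logb 2 (pY p.2) = -ent pY := by
      rw [hF, sum_pmap_mul (fun ω => (X ω, Y ω)) μ (fun p => Real.logb 2 (pY p.2))]
      rw [ent_eq_neg, neg_neg, hpY, sum_pmap_mul Y μ (fun b => Real.logb 2 (pY b))]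
    have e3 : ∑ p : α × β, F p * Real.logb 2 (pW (w₁ p.1)) = -ent pW := by
      rw [hF, sum_pmap_mul (fun ω => (X ω, Y ω)) μ (fun p => Real.logb 2 (pW (w₁ p.1)))]
      rw [ent_eq_neg, neg_neg, hpW, sum_pmap_mul (fun ω => w₁ (X ω)) μ (fun c => Real.logb 2 (pW c))]
    calc ∑ p, F p * (Real.logb 2 (pX p.1) + Real.logb 2 (pY p.2) - Real.logb 2 (pW (w₁ p.1)))
        = ∑ p : α × β, (F p * Real.logb 2 (pX p.1) + F p * Real.logb 2 (pY p.2)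
            - F p * Real.logb 2 (pW (w₁ p.1))) := by
          exact Finset.sum_congr rfl fun p _ => by ring
      _ = -ent pX + -ent pY + ent pW := by
          rw [Finset.sum_sub_distrib, Finset.sum_add_distrib, e1, e2, e3]; ring
  rw [hexp, hsplit] at main
  linarith

end Submod

-- Part 4: chain rule, conditional distributions
section Chain
open Finset Real

variable {α β γ δ : Type*} [Fintype α] [Fintype β] [Fintype γ] [Fintype δ]

lemma margSnd_eq_pmap (ρ : α × γ → ℝ) : margSnd ρ = pmap Prod.snd ρ := by
  funext z
  rw [pmap_snd_apply]
  rfl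

lemma margFst_eq_pmap (ρ : α × γ → ℝ) : margFst ρ = pmap Prod.fst ρ := by
  funext a
  rw [pmap_fst_apply]
  rfl

lemma margSnd_apply_eq_zero {ρ : α × γ → ℝ} (hnn : ∀ p, 0 ≤ ρ p) {z : γ}
    (hz : margSnd ρ z = 0) (a : α) : ρ (a, z) = 0 := by
  have h := (Finset.sum_eq_zero_iff_of_nonneg (fun a _ => hnn (a, z))).1 hz
  exact h a (Finset.mem_univ a)

lemma mul_nphi_div {p m : ℝ} (hp : 0 ≤ p) (hm : 0 < m) :
    m * nphi (p / m) = nphi p + p * Real.logb 2 m := by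
  rcases eq_or_lt_of_le hp with h | h
  · simp [← h, nphi_zero]
  · unfold nphi
    rw [Real.logb_div (ne_of_gt h) (ne_of_gt hm)]
    field_simp
    ring

/-- chain rule: `H(X|Z) = H(X,Z) - H(Z)` -/
lemma condEnt_eq {ρ : α × γ → ℝ} (hnn : ∀ p, 0 ≤ ρ p) :
    condEnt ρ = ent ρ - ent (margSnd ρ) := by
  have key : ∀ z, margSnd ρ z * ent (condDist ρ z)
      = (∑ a, nphi (ρ (a, z))) - nphi (margSnd ρ z) := by
    intro z
    by_cases hz : margSnd ρ z = 0
    · rw [hz, zero_mul, nphi_zero, sub_zero]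
      symm
      refine Finset.sum_eq_zero fun a _ => ?_
      rw [margSnd_apply_eq_zero hnn hz a, nphi_zero]
    · have hm : 0 < margSnd ρ z :=
        lt_of_le_of_ne (Finset.sum_nonneg fun a _ => hnn (a, z)) (Ne.symm hz)
      rw [ent_eq, Finset.mul_sum]
      have : ∀ a, margSnd ρ z * nphi (condDist ρ z a)
          = nphi (ρ (a, z)) + ρ (a, z) * Real.logb 2 (margSnd ρ z) := by
        intro a
        unfold condDist
        exact mul_nphi_div (hnn (a, z)) hm
      rw [Finset.sum_congr rfl fun a _ => this a, Finset.sum_add_distrib, ← Finset.sum_mul]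
      have hms : ∑ a, ρ (a, z) = margSnd ρ z := rfl
      rw [hms]
      unfold nphi
      try ring
  unfold condEnt
  rw [Finset.sum_congr rfl fun z _ => key z, Finset.sum_sub_distrib]
  have h1 : ∑ z, ∑ a, nphi (ρ (a, z)) = ent ρ := by
    rw [ent_eq, Fintype.sum_prod_type_right]
  have h2 : ∑ z, nphi (margSnd ρ z) = ent (margSnd ρ) := (ent_eq _).symm
  rw [h1, h2]

lemma margSnd_pmapFiber (f : α → β) (ρ : α × γ → ℝ) :
    margSnd (pmap (fun p => (f p.1, p.2)) ρ) = margSnd ρ := by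
  rw [margSnd_eq_pmap, margSnd_eq_pmap, pmap_comp]

lemma condDist_pmapFiber (f : α → β) (ρ : α × γ → ℝ) (z : γ) :
    condDist (pmap (fun p => (f p.1, p.2)) ρ) z = pmap f (condDist ρ z) := by
  funext b
  unfold condDist
  rw [margSnd_pmapFiber]
  have hnum : pmap (fun p => (f p.1, p.2)) ρ (b, z)
      = ∑ a, (if f a = b then ρ (a, z) else 0) := by
    unfold pmap
    rw [Fintype.sum_prod_type_right]
    rw [Finset.sum_eq_single z]
    · refine Finset.sum_congr rfl fun a _ => ?_
      by_cases hc : f a = b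
      · simp [hc]
      · simp [hc, Prod.ext_iff]
    · intro z' _ hne
      refine Finset.sum_eq_zero fun a _ => ?_
      simp [Prod.ext_iff, hne]
    · simp
  rw [hnum]
  unfold pmap
  rw [Finset.sum_div]
  refine Finset.sum_congr rfl fun a _ => ?_
  split <;> simp

/-- `∑_z P(z) H(f(X)|Z=z) = H(f(X),Z) - H(Z)` -/
lemma sum_ent_pmap_condDist {ρ : α × γ → ℝ} (hdist : IsDist ρ) (f : α → β) :
    ∑ z, margSnd ρ z * ent (pmap f (condDist ρ z))
      = ent (pmap (fun p => (f p.1, p.2)) ρ) - ent (margSnd ρ) := by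
  have h1 : condEnt (pmap (fun p => (f p.1, p.2)) ρ)
      = ∑ z, margSnd ρ z * ent (pmap f (condDist ρ z)) := by
    unfold condEnt
    rw [margSnd_pmapFiber]
    exact Finset.sum_congr rfl fun z _ => by rw [condDist_pmapFiber]
  have hnn : ∀ p, 0 ≤ pmap (fun p : α × γ => (f p.1, p.2)) ρ p := pmap_nonneg hdist.1
  rw [← h1, condEnt_eq hnn, margSnd_pmapFiber]

/-- conditional mutual information in terms of entropies -/
lemma condMutInfo_eq {ρ : (α × β) × γ → ℝ} (hdist : IsDist ρ) :
    condMutInfo ρ = ent (pmap (fun p => (p.1.1, p.2)) ρ) + ent (pmap (fun p => (p.1.2, p.2)) ρ)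
      - ent ρ - ent (margSnd ρ) := by
  unfold condMutInfo mutInfo
  have key : ∀ z : γ, margSnd ρ z * (ent (margFst (condDist ρ z)) + ent (margSnd (condDist ρ z))
      - ent (condDist ρ z))
      = margSnd ρ z * ent (pmap Prod.fst (condDist ρ z))
        + margSnd ρ z * ent (pmap Prod.snd (condDist ρ z))
        - margSnd ρ z * ent (condDist ρ z) := by
    intro z
    rw [margFst_eq_pmap (condDist ρ z), margSnd_eq_pmap (condDist ρ z)]
    ring
  rw [Finset.sum_congr rfl fun z _ => key z, Finset.sum_sub_distrib, Finset.sum_add_distrib]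
  rw [sum_ent_pmap_condDist hdist Prod.fst, sum_ent_pmap_condDist hdist Prod.snd]
  have h3 : ∑ z, margSnd ρ z * ent (condDist ρ z) = ent ρ - ent (margSnd ρ) :=
    condEnt_eq hdist.1
  rw [h3]
  have e1 : pmap (fun p : (α × β) × γ => (Prod.fst p.1, p.2)) ρ
      = pmap (fun p : (α × β) × γ => (p.1.1, p.2)) ρ := rfl
  have e2 : pmap (fun p : (α × β) × γ => (Prod.snd p.1, p.2)) ρ
      = pmap (fun p : (α × β) × γ => (p.1.2, p.2)) ρ := rfl
  rw [e1, e2]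
  ring

end Chain

-- Part 5: glued measure (conditionally independent copies over Z)
section Glue
open Finset Real

variable {Ω ζ κ : Type*} [Fintype Ω] [Fintype ζ] [Fintype κ]

/-- two conditionally independent copies given `Z` -/
def glueD (μ : Ω → ℝ) (Z : Ω → ζ) : Ω × Ω → ℝ :=
  fun p => if Z p.1 = Z p.2 then μ p.1 * μ p.2 / pmap Z μ (Z p.1) else 0

lemma glueD_nonneg {μ : Ω → ℝ} (hnn : ∀ a, 0 ≤ μ a) (Z : Ω → ζ) (p : Ω × Ω) :
    0 ≤ glueD μ Z p := by
  unfold glueD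
  split
  · exact div_nonneg (mul_nonneg (hnn _) (hnn _)) (pmap_nonneg hnn _)
  · exact le_refl 0

lemma glueD_ae {μ : Ω → ℝ} (Z : Ω → ζ) {p : Ω × Ω} (hp : glueD μ Z p ≠ 0) :
    Z p.1 = Z p.2 := by
  by_contra hc
  exact hp (by unfold glueD; rw [if_neg hc])

lemma glueD_fst_ne {μ : Ω → ℝ} (hnn : ∀ a, 0 ≤ μ a) (Z : Ω → ζ) {p : Ω × Ω}
    (hp : glueD μ Z p ≠ 0) : μ p.1 ≠ 0 ∧ μ p.2 ≠ 0 := by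
  constructor <;> · intro h; apply hp; unfold glueD; split <;> simp [h]

lemma glueD_row {μ : Ω → ℝ} (hnn : ∀ a, 0 ≤ μ a) (Z : Ω → ζ) (a : Ω) :
    ∑ b, glueD μ Z (a, b) = μ a := by
  unfold glueD
  have key : ∀ b, (if Z a = Z b then μ a * μ b / pmap Z μ (Z a) else 0)
      = μ a / pmap Z μ (Z a) * (if Z b = Z a then μ b else 0) := by
    intro b
    by_cases hc : Z a = Z b
    · rw [if_pos hc, if_pos hc.symm]; ring
    · rw [if_neg hc, if_neg (Ne.symm hc), mul_zero]
  rw [Finset.sum_congr rfl fun b _ => key b, ← Finset.mul_sum]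
  have hsum : ∑ b, (if Z b = Z a then μ b else 0) = pmap Z μ (Z a) := rfl
  rw [hsum]
  by_cases hz : pmap Z μ (Z a) = 0
  · rw [hz]
    have : μ a = 0 := le_antisymm (hz ▸ pmap_le hnn a) (hnn a)
    simp [this]
  · rw [div_mul_cancel₀ _ hz]

lemma glueD_col {μ : Ω → ℝ} (hnn : ∀ a, 0 ≤ μ a) (Z : Ω → ζ) (b : Ω) :
    ∑ a, glueD μ Z (a, b) = μ b := by
  unfold glueD
  have key : ∀ a, (if Z a = Z b then μ a * μ b / pmap Z μ (Z a) else 0)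
      = μ b / pmap Z μ (Z b) * (if Z a = Z b then μ a else 0) := by
    intro a
    by_cases hc : Z a = Z b
    · rw [if_pos hc, if_pos hc, hc]; ring
    · rw [if_neg hc, if_neg hc, mul_zero]
  rw [Finset.sum_congr rfl fun a _ => key a, ← Finset.mul_sum]
  have hsum : ∑ a, (if Z a = Z b then μ a else 0) = pmap Z μ (Z b) := rfl
  rw [hsum]
  by_cases hz : pmap Z μ (Z b) = 0
  · rw [hz]
    have : μ b = 0 := le_antisymm (hz ▸ pmap_le hnn b) (hnn b)
    simp [this]
  · rw [div_mul_cancel₀ _ hz]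

lemma isDist_glueD {μ : Ω → ℝ} (hd : IsDist μ) (Z : Ω → ζ) : IsDist (glueD μ Z) := by
  refine ⟨glueD_nonneg hd.1 Z, ?_⟩
  rw [Fintype.sum_prod_type]
  rw [Finset.sum_congr rfl fun a _ => glueD_row hd.1 Z a]
  exact hd.2

lemma pmap_glueD_fst {μ : Ω → ℝ} (hnn : ∀ a, 0 ≤ μ a) (Z : Ω → ζ) (F : Ω → κ) :
    pmap (fun p : Ω × Ω => F p.1) (glueD μ Z) = pmap F μ := by
  funext c
  unfold pmap
  rw [Fintype.sum_prod_type]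
  refine Finset.sum_congr rfl fun a _ => ?_
  by_cases hc : F a = c
  · simp only [hc, if_true]
    exact glueD_row hnn Z a
  · simp [hc]

lemma pmap_glueD_snd {μ : Ω → ℝ} (hnn : ∀ a, 0 ≤ μ a) (Z : Ω → ζ) (F : Ω → κ) :
    pmap (fun p : Ω × Ω => F p.2) (glueD μ Z) = pmap F μ := by
  funext c
  unfold pmap
  rw [Fintype.sum_prod_type_right]
  refine Finset.sum_congr rfl fun b _ => ?_
  by_cases hc : F b = c
  · simp only [hc, if_true]
    exact glueD_col hnn Z b
  · simp [hc]

lemma ent_glueD {μ : Ω → ℝ} (hnn : ∀ a, 0 ≤ μ a) (Z : Ω → ζ) :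
    ent (glueD μ Z) = 2 * ent μ - ent (pmap Z μ) := by
  set c : ζ → ℝ := pmap Z μ with hc
  have hcnn : ∀ z, 0 ≤ c z := pmap_nonneg hnn
  have hμc : ∀ a, μ a ≤ c (Z a) := fun a => pmap_le hnn a
  have key : ∀ p : Ω × Ω, nphi (glueD μ Z p)
      = (if Z p.1 = Z p.2 then μ p.2 / c (Z p.1) * nphi (μ p.1)
          + μ p.1 / c (Z p.1) * nphi (μ p.2)
          + μ p.1 * μ p.2 / c (Z p.1) * Real.logb 2 (c (Z p.1)) else 0) := by
    rintro ⟨a, b⟩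
    unfold glueD
    dsimp only
    by_cases hz : Z a = Z b
    · rw [if_pos hz, if_pos hz]
      by_cases ha : μ a = 0
      · simp [ha, nphi_zero]
      · by_cases hb : μ b = 0
        · simp [hb, nphi_zero]
        · have hap : 0 < μ a := lt_of_le_of_ne (hnn a) (Ne.symm ha)
          have hbp : 0 < μ b := lt_of_le_of_ne (hnn b) (Ne.symm hb)
          have hcp : 0 < c (Z a) := lt_of_lt_of_le hap (hμc a)
          simp only [← hc]
          unfold nphi
          rw [Real.logb_div (by positivity) (ne_of_gt hcp),
            Real.logb_mul (ne_of_gt hap) (ne_of_gt hbp)]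
          field_simp
          ring
    · rw [if_neg hz, if_neg hz, nphi_zero]
  rw [ent_eq, Finset.sum_congr rfl fun p _ => key p]
  have split : ∀ a b : Ω, (if Z a = Z b then μ b / c (Z a) * nphi (μ a)
        + μ a / c (Z a) * nphi (μ b) + μ a * μ b / c (Z a) * Real.logb 2 (c (Z a)) else 0)
      = (if Z b = Z a then μ b / c (Z a) * nphi (μ a) else 0)
        + (if Z a = Z b then μ a / c (Z b) * nphi (μ b) else 0)
        + (if Z b = Z a then μ a * μ b / c (Z a) * Real.logb 2 (c (Z a)) else 0) := by
    intro a b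
    by_cases hz : Z a = Z b
    · rw [if_pos hz, if_pos hz.symm, if_pos hz.symm, if_pos hz, hz]
    · rw [if_neg hz, if_neg (Ne.symm hz), if_neg (Ne.symm hz), if_neg hz]
      ring
  rw [Fintype.sum_prod_type]
  rw [Finset.sum_congr rfl fun a _ => Finset.sum_congr rfl fun b _ => split a b]
  simp only [Finset.sum_add_distrib]
  have T1 : ∑ a, ∑ b, (if Z b = Z a then μ b / c (Z a) * nphi (μ a) else 0) = ent μ := by
    rw [ent_eq]
    refine Finset.sum_congr rfl fun a _ => ?_
    have : ∀ b, (if Z b = Z a then μ b / c (Z a) * nphi (μ a) else 0)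
        = nphi (μ a) / c (Z a) * (if Z b = Z a then μ b else 0) := by
      intro b; split <;> ring
    rw [Finset.sum_congr rfl fun b _ => this b, ← Finset.mul_sum]
    have hsum : ∑ b, (if Z b = Z a then μ b else 0) = c (Z a) := rfl
    rw [hsum]
    by_cases hz : c (Z a) = 0
    · have : μ a = 0 := le_antisymm (hz ▸ hμc a) (hnn a)
      simp [this, nphi_zero]
    · rw [div_mul_cancel₀ _ hz]
  have T2 : ∑ a, ∑ b, (if Z a = Z b then μ a / c (Z b) * nphi (μ b) else 0) = ent μ := by
    rw [Finset.sum_comm, ent_eq]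
    refine Finset.sum_congr rfl fun b _ => ?_
    have : ∀ a, (if Z a = Z b then μ a / c (Z b) * nphi (μ b) else 0)
        = nphi (μ b) / c (Z b) * (if Z a = Z b then μ a else 0) := by
      intro a; split <;> ring
    rw [Finset.sum_congr rfl fun a _ => this a, ← Finset.mul_sum]
    have hsum : ∑ a, (if Z a = Z b then μ a else 0) = c (Z b) := rfl
    rw [hsum]
    by_cases hz : c (Z b) = 0
    · have : μ b = 0 := le_antisymm (hz ▸ hμc b) (hnn b)
      simp [this, nphi_zero]
    · rw [div_mul_cancel₀ _ hz]
  have T3 : ∑ a, ∑ b, (if Z b = Z a then μ a * μ b / c (Z a) * Real.logb 2 (c (Z a)) else 0)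
      = -ent c := by
    have inner : ∀ a, ∑ b, (if Z b = Z a then μ a * μ b / c (Z a) * Real.logb 2 (c (Z a)) else 0)
        = μ a * Real.logb 2 (c (Z a)) := by
      intro a
      have : ∀ b, (if Z b = Z a then μ a * μ b / c (Z a) * Real.logb 2 (c (Z a)) else 0)
          = μ a * Real.logb 2 (c (Z a)) / c (Z a) * (if Z b = Z a then μ b else 0) := by
        intro b; split <;> ring
      rw [Finset.sum_congr rfl fun b _ => this b, ← Finset.mul_sum]
      have hsum : ∑ b, (if Z b = Z a then μ b else 0) = c (Z a) := rfl
      rw [hsum]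
      by_cases hz : c (Z a) = 0
      · have : μ a = 0 := le_antisymm (hz ▸ hμc a) (hnn a)
        simp [this]
      · rw [div_mul_cancel₀ _ hz]
    rw [Finset.sum_congr rfl fun a _ => inner a]
    rw [← sum_pmap_mul Z μ (fun z => Real.logb 2 (c z)), ent_eq_neg, neg_neg]
    try rfl
  rw [T1, T2, T3]
  ring

end Glue

-- Part 6: the BSG argument, part I: slice formulas and the mixture identity
section BSG1
open Finset Real

variable {G γ : Type*} [Fintype G] [Fintype γ] [AddCommGroup G]

/-- the conditioning map `(A,B,C) ↦ (A+B, C)` -/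
def zmap : (G × G) × γ → G × γ := fun p => (p.1.1 + p.1.2, p.2)

/-- joint of `(A,B)` with `(A+B, C)` -/
def pjoint (P₀ : (G × G) × γ → ℝ) : (G × G) × (G × γ) → ℝ :=
  pmap (fun p : (G × G) × γ => (p.1, (p.1.1 + p.1.2, p.2))) P₀

lemma margSnd_pjoint (P₀ : (G × G) × γ → ℝ) :
    margSnd (pjoint P₀) = pmap zmap P₀ := by
  rw [margSnd_eq_pmap, pjoint, pmap_comp]
  rfl

lemma pjoint_apply (P₀ : (G × G) × γ → ℝ) (a b : G) (d : G) (c : γ) :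
    pjoint P₀ ((a, b), (d, c)) = if a + b = d then P₀ ((a, b), c) else 0 := by
  unfold pjoint pmap
  rw [Finset.sum_eq_single ((a, b), c)]
  · by_cases hd : a + b = d
    · simp [hd]
    · simp [Prod.ext_iff, hd]
  · rintro ⟨⟨a', b'⟩, c'⟩ _ hne
    simp only [Prod.ext_iff, ite_eq_right_iff, and_imp]
    intro h1 h2 h3 h4
    exact absurd (by simp [Prod.ext_iff, h1, h2, h4]) hne
  · simp

lemma alpha_apply (P₀ : (G × G) × γ → ℝ) (d : G) (c : γ) (x : G) :
    pmap Prod.fst (condDist (pjoint P₀) (d, c)) x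
      = P₀ ((x, d - x), c) / pmap zmap P₀ (d, c) := by
  unfold pmap condDist
  rw [margSnd_pjoint]
  rw [Fintype.sum_prod_type]
  rw [Finset.sum_eq_single x]
  · have triv : ∀ b : G, (if (x, b).1 = x then pjoint P₀ ((x, b), (d, c)) / pmap zmap P₀ (d, c) else 0)
        = pjoint P₀ ((x, b), (d, c)) / pmap zmap P₀ (d, c) := fun b => if_pos rfl
    rw [Finset.sum_congr rfl fun b _ => triv b, ← Finset.sum_div]
    congr 1
    have : ∀ b, pjoint P₀ ((x, b), (d, c)) = if b = d - x then P₀ ((x, b), c) else 0 := by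
      intro b
      rw [pjoint_apply]
      refine if_congr ?_ rfl rfl
      constructor
      · intro h; rw [← h]; abel
      · intro h; rw [h]; abel
    rw [Finset.sum_congr rfl fun b _ => this b, Finset.sum_ite_eq' Finset.univ (d - x)]
    simp
  · intro x' _ hne
    refine Finset.sum_eq_zero fun b _ => ?_
    simp [hne]
  · simp

lemma beta_apply (P₀ : (G × G) × γ → ℝ) (d : G) (c : γ) (y : G) :
    pmap Prod.snd (condDist (pjoint P₀) (d, c)) y
      = P₀ ((d - y, y), c) / pmap zmap P₀ (d, c) := by
  unfold pmap condDist
  rw [margSnd_pjoint]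
  rw [Fintype.sum_prod_type_right]
  rw [Finset.sum_eq_single y]
  · have triv : ∀ a : G, (if (a, y).2 = y then pjoint P₀ ((a, y), (d, c)) / pmap zmap P₀ (d, c) else 0)
        = pjoint P₀ ((a, y), (d, c)) / pmap zmap P₀ (d, c) := fun a => if_pos rfl
    rw [Finset.sum_congr rfl fun a _ => triv a, ← Finset.sum_div]
    congr 1
    have : ∀ a, pjoint P₀ ((a, y), (d, c)) = if a = d - y then P₀ ((a, y), c) else 0 := by
      intro a
      rw [pjoint_apply]
      refine if_congr ?_ rfl rfl
      constructor
      · intro h; rw [← h]; abel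
      · intro h; rw [h]; abel
    rw [Finset.sum_congr rfl fun a _ => this a, Finset.sum_ite_eq' Finset.univ (d - y)]
    simp
  · intro y' _ hne
    refine Finset.sum_eq_zero fun a _ => ?_
    simp [hne]
  · simp

/-- row sums of slices: `∑_x P₀((x, d-x), c) = pZ (d,c)` -/
lemma slice_sum (P₀ : (G × G) × γ → ℝ) (d : G) (c : γ) :
    ∑ x, P₀ ((x, d - x), c) = pmap zmap P₀ (d, c) := by
  symm
  unfold pmap
  rw [Fintype.sum_prod_type]
  rw [Fintype.sum_prod_type]
  refine Finset.sum_congr rfl fun x _ => ?_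
  rw [Finset.sum_eq_single (d - x)]
  · rw [Finset.sum_eq_single c]
    · have hx : x + (d - x) = d := by abel
      simp [zmap, hx]
    · intro c' _ hne; simp [zmap, Prod.ext_iff, hne]
    · simp
  · intro b _ hne
    refine Finset.sum_eq_zero fun c' _ => ?_
    have hxb : ¬ (x + b = d) := fun h => hne (by rw [← h]; abel)
    simp [zmap, Prod.ext_iff, hxb]
  · simp

/-- the map `A₁ + B₂` with `C₁`, on the glued square -/
def wmap : (((G × G) × γ) × ((G × G) × γ)) → G × γ :=
  fun pq => (pq.1.1.1 + pq.2.1.2, pq.1.2)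

/-- abbreviation for the conditional convolution -/
def cconv (P₀ : (G × G) × γ → ℝ) (z : G × γ) : G → ℝ :=
  addDist (pmap Prod.fst (condDist (pjoint P₀) z)) (pmap Prod.snd (condDist (pjoint P₀) z))

lemma cconv_formula (P₀ : (G × G) × γ → ℝ) (d : G) (c : γ) (u : G) :
    pmap zmap P₀ (d, c) * cconv P₀ (d, c) u
      = ∑ x, P₀ ((x, d - x), c) * P₀ ((d - (u - x), u - x), c) / pmap zmap P₀ (d, c) := by
  unfold cconv addDist
  rw [Finset.mul_sum]
  refine Finset.sum_congr rfl fun x _ => ?_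
  rw [alpha_apply, beta_apply]
  by_cases hm : pmap zmap P₀ (d, c) = 0
  · rw [hm]; simp
  · field_simp

lemma ident_step_b {P₀ : (G × G) × γ → ℝ} (hnn : ∀ p, 0 ≤ P₀ p) (u : G) (c : γ) :
    pmap wmap (glueD P₀ zmap) (u, c)
      = ∑ p : (G × G) × γ, (if p.2 = c then
          P₀ p * P₀ (((p.1.1 + p.1.2) - (u - p.1.1), u - p.1.1), p.2)
            / pmap zmap P₀ (p.1.1 + p.1.2, p.2) else 0) := by
  unfold pmap
  rw [Fintype.sum_prod_type]
  refine Finset.sum_congr rfl fun p _ => ?_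
  set q₀ : (G × G) × γ := (((p.1.1 + p.1.2) - (u - p.1.1), u - p.1.1), p.2) with hq₀
  rw [Finset.sum_eq_single q₀]
  · have hW : wmap (p, q₀) = (u, p.2) := by
      unfold wmap
      rw [hq₀]
      simp only
      congr 1
      abel
    have hZ : zmap q₀ = zmap p := by
      unfold zmap
      rw [hq₀]
      simp only
      congr 1
      abel
    have hτ : glueD P₀ zmap (p, q₀) = P₀ p * P₀ q₀ / pmap zmap P₀ (zmap p) := by
      unfold glueD
      rw [if_pos hZ.symm]
    by_cases hc : p.2 = c
    · rw [if_pos (by rw [hW, hc]), if_pos hc, hτ]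
      rfl
    · rw [if_neg (by rw [hW]; simp [Prod.ext_iff, hc]), if_neg hc]
  · intro q _ hne
    by_cases hW : wmap (p, q) = (u, c)
    · rw [if_pos hW]
      by_contra hτ
      have hZ := glueD_ae zmap (p := (p, q)) hτ
      apply hne
      have h1 : q.1.2 = u - p.1.1 := by
        have := congrArg Prod.fst hW
        unfold wmap at this
        simp only at this
        rw [eq_sub_iff_add_eq, add_comm]
        exact this
      have h2 : q.2 = p.2 := (congrArg Prod.snd hZ).symm
      have h3 : q.1.1 + q.1.2 = p.1.1 + p.1.2 := (congrArg Prod.fst hZ).symm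
      have h4 : q.1.1 = (p.1.1 + p.1.2) - (u - p.1.1) := by
        rw [← h3, ← h1]
        abel
      rw [hq₀]
      exact Prod.ext (Prod.ext h4 h1) h2
    · rw [if_neg hW]
  · simp

lemma ident_step_c {P₀ : (G × G) × γ → ℝ} (hnn : ∀ p, 0 ≤ P₀ p) (u : G) (c : γ) :
    ∑ p : (G × G) × γ, (if p.2 = c then
          P₀ p * P₀ (((p.1.1 + p.1.2) - (u - p.1.1), u - p.1.1), p.2)
            / pmap zmap P₀ (p.1.1 + p.1.2, p.2) else 0)
      = ∑ d, pmap zmap P₀ (d, c) * cconv P₀ (d, c) u := by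
  rw [Fintype.sum_prod_type]
  have inner : ∀ ab : G × G, ∑ c' : γ, (if c' = c then
        P₀ (ab, c') * P₀ (((ab.1 + ab.2) - (u - ab.1), u - ab.1), c')
          / pmap zmap P₀ (ab.1 + ab.2, c') else 0)
      = P₀ (ab, c) * P₀ (((ab.1 + ab.2) - (u - ab.1), u - ab.1), c)
          / pmap zmap P₀ (ab.1 + ab.2, c) := by
    intro ab
    rw [Finset.sum_ite_eq' Finset.univ c]
    simp
  rw [Finset.sum_congr rfl fun ab _ => inner ab]
  rw [Fintype.sum_prod_type]
  have reix : ∀ x : G,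
      ∑ b, P₀ ((x, b), c) * P₀ (((x + b) - (u - x), u - x), c) / pmap zmap P₀ (x + b, c)
      = ∑ d, P₀ ((x, d - x), c) * P₀ ((d - (u - x), u - x), c) / pmap zmap P₀ (d, c) := by
    intro x
    refine Fintype.sum_equiv (Equiv.addLeft x) _ _ fun b => ?_
    have h1 : (Equiv.addLeft x) b = x + b := rfl
    rw [h1]
    have h2 : x + b - x = b := by abel
    rw [h2]
  rw [Finset.sum_congr rfl fun x _ => reix x, Finset.sum_comm]
  refine Finset.sum_congr rfl fun d _ => ?_
  rw [cconv_formula]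

/-- the mixture identity -/
lemma wmap_mixture {P₀ : (G × G) × γ → ℝ} (hnn : ∀ p, 0 ≤ P₀ p) (u : G) (c : γ) :
    pmap wmap (glueD P₀ zmap) (u, c) = ∑ d, pmap zmap P₀ (d, c) * cconv P₀ (d, c) u := by
  rw [ident_step_b hnn u c, ident_step_c hnn u c]

end BSG1

-- Part 7: mixing step
section BSG2
open Finset Real

variable {G γ : Type*} [Fintype G] [Fintype γ] [AddCommGroup G]

lemma condDist_nonneg {α δ : Type*} [Fintype α] {ρ : α × δ → ℝ} (hnn : ∀ p, 0 ≤ ρ p)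
    (z : δ) (a : α) : 0 ≤ condDist ρ z a := by
  unfold condDist
  exact div_nonneg (hnn _) (Finset.sum_nonneg fun a' _ => hnn _)

lemma cconv_nonneg {P₀ : (G × G) × γ → ℝ} (hnn : ∀ p, 0 ≤ P₀ p) (z : G × γ) (u : G) :
    0 ≤ cconv P₀ z u := by
  unfold cconv addDist
  have h1 : ∀ ab : G × G, 0 ≤ condDist (pjoint P₀) z ab := fun ab =>
    condDist_nonneg (ρ := pjoint P₀) (pmap_nonneg hnn) z ab
  exact Finset.sum_nonneg fun x _ => mul_nonneg (pmap_nonneg h1 _) (pmap_nonneg h1 _)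

lemma slice_sum' (P₀ : (G × G) × γ → ℝ) (d : G) (c : γ) :
    ∑ y, P₀ ((d - y, y), c) = pmap zmap P₀ (d, c) := by
  rw [← slice_sum P₀ d c]
  refine Fintype.sum_equiv (Equiv.subLeft d) _ _ fun y => ?_
  have h1 : (Equiv.subLeft d) y = d - y := rfl
  rw [h1]
  have h2 : d - (d - y) = y := by abel
  rw [h2]

lemma cconv_sum {P₀ : (G × G) × γ → ℝ} (hnn : ∀ p, 0 ≤ P₀ p) (d : G) (c : γ)
    (hm : pmap zmap P₀ (d, c) ≠ 0) : ∑ u, cconv P₀ (d, c) u = 1 := by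
  unfold cconv addDist
  rw [Finset.sum_comm]
  have h1 : ∀ x, ∑ u, pmap Prod.fst (condDist (pjoint P₀) (d, c)) x
      * pmap Prod.snd (condDist (pjoint P₀) (d, c)) (u - x)
      = pmap Prod.fst (condDist (pjoint P₀) (d, c)) x := by
    intro x
    rw [← Finset.mul_sum]
    have h2 : ∑ u, pmap Prod.snd (condDist (pjoint P₀) (d, c)) (u - x)
        = ∑ y, pmap Prod.snd (condDist (pjoint P₀) (d, c)) y := by
      refine Fintype.sum_equiv (Equiv.subRight x) _ _ fun u => rfl
    rw [h2]
    have h3 : ∑ y, pmap Prod.snd (condDist (pjoint P₀) (d, c)) y = 1 := by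
      rw [Finset.sum_congr rfl fun y _ => beta_apply P₀ d c y, ← Finset.sum_div,
        slice_sum' P₀ d c, div_self hm]
    rw [h3, mul_one]
  rw [Finset.sum_congr rfl fun x _ => h1 x]
  rw [Finset.sum_congr rfl fun x _ => alpha_apply P₀ d c x, ← Finset.sum_div,
    slice_sum P₀ d c, div_self hm]

lemma ent_div {α : Type*} [Fintype α] {σ : α → ℝ} (hnn : ∀ u, 0 ≤ σ u) {m : ℝ}
    (hm : 0 < m) : m * ent (fun u => σ u / m) = ent σ + (∑ u, σ u) * Real.logb 2 m := by
  rw [ent_eq, ent_eq, Finset.mul_sum, Finset.sum_mul, ← Finset.sum_add_distrib]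
  exact Finset.sum_congr rfl fun u _ => mul_nphi_div (hnn u) hm

/-- Step B : mixing bound -/
lemma mix_step {P₀ : (G × G) × γ → ℝ} (hd : IsDist P₀) :
    ∑ z : G × γ, pmap zmap P₀ z * ent (cconv P₀ z)
      ≤ ent (pmap wmap (glueD P₀ zmap)) - ent (pmap (fun p : (G × G) × γ => p.2) P₀) := by
  set pZ := pmap zmap P₀ with hpZ
  set pC := pmap (fun p : (G × G) × γ => p.2) P₀ with hpC
  have hZnn : ∀ z, 0 ≤ pZ z := pmap_nonneg hd.1
  have hCnn : ∀ c, 0 ≤ pC c := pmap_nonneg hd.1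
  have hpCZ : ∀ c, pC c = ∑ d, pZ (d, c) := by
    intro c
    have h1 : pC = pmap Prod.snd pZ := by
      rw [hpC, hpZ, pmap_comp]; rfl
    rw [h1, pmap_snd_apply]
  have hZle : ∀ d c, pZ (d, c) ≤ pC c := by
    intro d c
    rw [hpCZ c]
    exact Finset.single_le_sum (fun d' _ => hZnn (d', c)) (Finset.mem_univ d)
  set L : γ → G → ℝ := fun c u => pmap wmap (glueD P₀ zmap) (u, c) with hL
  have hLid : ∀ c u, L c u = ∑ d, pZ (d, c) * cconv P₀ (d, c) u := fun c u =>
    wmap_mixture hd.1 u c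
  have hLsum : ∀ c, ∑ u, L c u = pC c := by
    intro c
    rw [Finset.sum_congr rfl fun u _ => hLid c u, Finset.sum_comm, hpCZ c]
    refine Finset.sum_congr rfl fun d _ => ?_
    rw [← Finset.mul_sum]
    by_cases hm : pZ (d, c) = 0
    · rw [hm, zero_mul]
    · rw [cconv_sum hd.1 d c hm, mul_one]
  have perC : ∀ c, ∑ d, pZ (d, c) * ent (cconv P₀ (d, c)) ≤ ent (L c) - nphi (pC c) := by
    intro c
    by_cases hc : pC c = 0
    · have hz : ∀ d, pZ (d, c) = 0 := fun d => le_antisymm (hc ▸ hZle d c) (hZnn (d, c))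
      have hL0 : ∀ u, L c u = 0 := by
        intro u
        rw [hLid c u]
        exact Finset.sum_eq_zero fun d _ => by rw [hz d, zero_mul]
      have : ent (L c) = 0 := by
        rw [ent_eq]
        exact Finset.sum_eq_zero fun u _ => by rw [hL0 u, nphi_zero]
      rw [this, hc, nphi_zero, sub_zero]
      exact le_of_eq (Finset.sum_eq_zero fun d _ => by rw [hz d, zero_mul])
    · have hcp : 0 < pC c := lt_of_le_of_ne (hCnn c) (Ne.symm hc)
      have hmix := ent_mix (w := fun d => pZ (d, c) / pC c) (σ := fun d => cconv P₀ (d, c))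
        (fun d => div_nonneg (hZnn _) (hCnn c))
        (fun d u => cconv_nonneg hd.1 _ u)
        (fun d hwd => cconv_sum hd.1 d c (fun h => hwd (show pZ (d, c) / pC c = 0 by
          rw [hpZ]; rw [h]; exact zero_div _)))
        (by rw [← Finset.sum_div, ← hpCZ c, div_self hc])
      have hmixr : (fun u => ∑ d, pZ (d, c) / pC c * cconv P₀ (d, c) u)
          = fun u => L c u / pC c := by
        funext u
        rw [hLid c u, Finset.sum_div]
        exact Finset.sum_congr rfl fun d _ => div_mul_eq_mul_div _ _ _
      rw [hmixr] at hmix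
      have hLnn : ∀ u, 0 ≤ L c u := fun u => pmap_nonneg (glueD_nonneg hd.1 zmap) (u, c)
      have hscale : pC c * ent (fun u => L c u / pC c)
          = ent (L c) + pC c * Real.logb 2 (pC c) := by
        rw [ent_div hLnn hcp, hLsum c]
      have e1 : ∑ d, pZ (d, c) * ent (cconv P₀ (d, c))
          = pC c * ∑ d, pZ (d, c) / pC c * ent (cconv P₀ (d, c)) := by
        rw [Finset.mul_sum]
        refine Finset.sum_congr rfl fun d _ => ?_
        field_simp
      have e2 : pC c * ∑ d, pZ (d, c) / pC c * ent (cconv P₀ (d, c))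
          ≤ pC c * ent (fun u => L c u / pC c) :=
        mul_le_mul_of_nonneg_left hmix hcp.le
      rw [e1]
      refine le_trans e2 ?_
      rw [hscale]
      unfold nphi
      linarith [le_refl (ent (L c))]
  calc ∑ z : G × γ, pZ z * ent (cconv P₀ z)
      = ∑ c, ∑ d, pZ (d, c) * ent (cconv P₀ (d, c)) := by
        rw [Fintype.sum_prod_type, Finset.sum_comm]
    _ ≤ ∑ c, (ent (L c) - nphi (pC c)) := Finset.sum_le_sum fun c _ => perC c
    _ = ent (pmap wmap (glueD P₀ zmap)) - ent pC := by
        have h2 : ∑ c, nphi (pC c) = ent pC := (ent_eq pC).symm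
        have h1 : ∑ c, ent (L c) = ent (pmap wmap (glueD P₀ zmap)) := by
          rw [ent_eq (pmap wmap (glueD P₀ zmap)), Fintype.sum_prod_type, Finset.sum_comm]
          exact Finset.sum_congr rfl fun c _ => by rw [ent_eq]
        rw [Finset.sum_sub_distrib, h1, h2]

end BSG2

-- Part 8: submodularity steps and the full BSG inequality
section BSG3
open Finset Real

variable {G γ : Type*} [Fintype G] [Fintype γ] [AddCommGroup G]

def xmap : (((G × G) × γ) × ((G × G) × γ)) → (G × G) × γ :=
  fun pq => ((pq.1.1.1, pq.2.1.2), pq.1.2)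

def ymap : (((G × G) × γ) × ((G × G) × γ)) → (G × G) × γ :=
  fun pq => ((pq.2.1.1, pq.1.1.2), pq.2.2)

def jmap : (G × G) × γ → (G × γ) × (G × γ) :=
  fun r => ((r.1.1, r.2), (r.1.2, r.2))

lemma jmap_inj : Function.Injective (jmap (G := G) (γ := γ)) := by
  rintro ⟨⟨a, b⟩, c⟩ ⟨⟨a', b'⟩, c'⟩ h
  simp only [jmap, Prod.ext_iff] at h
  simp [Prod.ext_iff, h.1.1, h.2.1, h.1.2]

lemma xymap_inj : Function.Injective
    (fun pq : (((G × G) × γ) × ((G × G) × γ)) => (xmap pq, ymap pq)) := by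
  rintro ⟨⟨⟨a1, b1⟩, c1⟩, ⟨⟨a2, b2⟩, c2⟩⟩ ⟨⟨⟨a1', b1'⟩, c1'⟩, ⟨⟨a2', b2'⟩, c2'⟩⟩ h
  simp only [xmap, ymap, Prod.ext_iff] at h
  simp [Prod.ext_iff]
  tauto

lemma char2_swap (hch : ∀ x : G, x + x = 0) {a b a' b' : G} (h : a + b = a' + b') :
    a' + b = a + b' := by
  have hneg : ∀ x : G, -x = x := fun x => neg_eq_of_add_eq_zero_left (hch x)
  have h1 : a' = a + b - b' := by
    rw [eq_sub_iff_add_eq, h]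
  rw [h1, sub_eq_add_neg, hneg]
  have h2 : a + b + b' + b = a + b' + (b + b) := by abel
  rw [h2, hch, add_zero]

lemma glue_ae_snd {P₀ : (G × G) × γ → ℝ} {pq : (((G × G) × γ) × ((G × G) × γ))}
    (h : glueD P₀ zmap pq ≠ 0) : pq.1.2 = pq.2.2 := by
  have h2 := congrArg Prod.snd (glueD_ae zmap h)
  exact h2

/-- Step C(1): grand submodularity -/
lemma ent_wmap_le {P₀ : (G × G) × γ → ℝ} (hch : ∀ x : G, x + x = 0) (hd : IsDist P₀) :
    ent (pmap wmap (glueD P₀ zmap))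
      ≤ ent (pmap xmap (glueD P₀ zmap)) + ent (pmap ymap (glueD P₀ zmap))
        - (2 * ent P₀ - ent (pmap zmap P₀)) := by
  have hτ : IsDist (glueD P₀ zmap) := isDist_glueD hd zmap
  have hae : ∀ pq, glueD P₀ zmap pq ≠ 0 → zmap (xmap pq) = zmap (ymap pq) := by
    intro pq hne
    have h1 := glueD_ae zmap hne
    have hc := congrArg Prod.snd h1
    have hd1 := congrArg Prod.fst h1
    simp only [zmap] at hc hd1
    have h2 : pq.1.1.1 + pq.2.1.2 = pq.2.1.1 + pq.1.1.2 := (char2_swap hch hd1).symm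
    simp only [zmap, xmap, ymap, Prod.ext_iff]
    exact ⟨h2, hc⟩
  have hsub := submod_fn hτ xmap ymap zmap zmap hae
  have e1 : pmap (fun pq => zmap (xmap pq)) (glueD P₀ zmap) = pmap wmap (glueD P₀ zmap) := rfl
  have e2 : ent (pmap (fun pq => (xmap pq, ymap pq)) (glueD P₀ zmap))
      = 2 * ent P₀ - ent (pmap zmap P₀) := by
    rw [ent_pmap_inj xymap_inj, ent_glueD hd.1]
  rw [e1, e2] at hsub
  linarith

/-- Step C(2): `H(X') ≤ H(A,C) + H(B,C) - H(C)` -/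
lemma ent_xmap_le {P₀ : (G × G) × γ → ℝ} (hd : IsDist P₀) :
    ent (pmap xmap (glueD P₀ zmap))
      ≤ ent (pmap (fun p : (G × G) × γ => (p.1.1, p.2)) P₀)
        + ent (pmap (fun p : (G × G) × γ => (p.1.2, p.2)) P₀)
        - ent (pmap (fun p : (G × G) × γ => p.2) P₀) := by
  have hτ : IsDist (glueD P₀ zmap) := isDist_glueD hd zmap
  have hsub := submod_fn hτ
    (fun pq : (((G × G) × γ) × ((G × G) × γ)) => (pq.1.1.1, pq.1.2))
    (fun pq : (((G × G) × γ) × ((G × G) × γ)) => (pq.2.1.2, pq.2.2))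
    Prod.snd Prod.snd
    (fun pq hne => glue_ae_snd hne)
  have e1 : pmap (fun pq : (((G × G) × γ) × ((G × G) × γ)) => pq.1.2) (glueD P₀ zmap)
      = pmap (fun p : (G × G) × γ => p.2) P₀ :=
    pmap_glueD_fst hd.1 zmap (fun p => p.2)
  have e2 : pmap (fun pq : (((G × G) × γ) × ((G × G) × γ)) => (pq.1.1.1, pq.1.2))
        (glueD P₀ zmap) = pmap (fun p : (G × G) × γ => (p.1.1, p.2)) P₀ :=
    pmap_glueD_fst hd.1 zmap (fun p => (p.1.1, p.2))
  have e3 : pmap (fun pq : (((G × G) × γ) × ((G × G) × γ)) => (pq.2.1.2, pq.2.2))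
        (glueD P₀ zmap) = pmap (fun p : (G × G) × γ => (p.1.2, p.2)) P₀ :=
    pmap_glueD_snd hd.1 zmap (fun p => (p.1.2, p.2))
  have e4 : ent (pmap (fun pq : (((G × G) × γ) × ((G × G) × γ)) =>
        ((pq.1.1.1, pq.1.2), (pq.2.1.2, pq.2.2))) (glueD P₀ zmap))
      = ent (pmap xmap (glueD P₀ zmap)) := by
    have hcongr : pmap (fun pq : (((G × G) × γ) × ((G × G) × γ)) =>
          ((pq.1.1.1, pq.1.2), (pq.2.1.2, pq.2.2))) (glueD P₀ zmap)
        = pmap (fun pq : (((G × G) × γ) × ((G × G) × γ)) =>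
          ((pq.1.1.1, pq.1.2), (pq.2.1.2, pq.1.2))) (glueD P₀ zmap) := by
      refine pmap_congr_ae fun pq hne => ?_
      rw [glue_ae_snd hne]
    have hj : (fun pq : (((G × G) × γ) × ((G × G) × γ)) =>
          ((pq.1.1.1, pq.1.2), (pq.2.1.2, pq.1.2)))
        = fun pq => jmap (xmap pq) := rfl
    rw [hcongr, hj, ← pmap_comp, ent_pmap_inj jmap_inj]
  rw [e1, e2, e3] at hsub
  have e5 : ent (pmap (fun ω : (((G × G) × γ) × ((G × G) × γ)) =>
        ((ω.1.1.1, ω.1.2), (ω.2.1.2, ω.2.2))) (glueD P₀ zmap))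
      = ent (pmap xmap (glueD P₀ zmap)) := e4
  rw [e5] at hsub
  linarith

/-- Step C(3): `H(Y') ≤ H(A,C) + H(B,C) - H(C)` -/
lemma ent_ymap_le {P₀ : (G × G) × γ → ℝ} (hd : IsDist P₀) :
    ent (pmap ymap (glueD P₀ zmap))
      ≤ ent (pmap (fun p : (G × G) × γ => (p.1.1, p.2)) P₀)
        + ent (pmap (fun p : (G × G) × γ => (p.1.2, p.2)) P₀)
        - ent (pmap (fun p : (G × G) × γ => p.2) P₀) := by
  have hτ : IsDist (glueD P₀ zmap) := isDist_glueD hd zmap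
  have hsub := submod_fn hτ
    (fun pq : (((G × G) × γ) × ((G × G) × γ)) => (pq.2.1.1, pq.2.2))
    (fun pq : (((G × G) × γ) × ((G × G) × γ)) => (pq.1.1.2, pq.1.2))
    Prod.snd Prod.snd
    (fun pq hne => (glue_ae_snd hne).symm)
  have e1 : pmap (fun pq : (((G × G) × γ) × ((G × G) × γ)) => pq.2.2) (glueD P₀ zmap)
      = pmap (fun p : (G × G) × γ => p.2) P₀ :=
    pmap_glueD_snd hd.1 zmap (fun p => p.2)
  have e2 : pmap (fun pq : (((G × G) × γ) × ((G × G) × γ)) => (pq.2.1.1, pq.2.2))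
        (glueD P₀ zmap) = pmap (fun p : (G × G) × γ => (p.1.1, p.2)) P₀ :=
    pmap_glueD_snd hd.1 zmap (fun p => (p.1.1, p.2))
  have e3 : pmap (fun pq : (((G × G) × γ) × ((G × G) × γ)) => (pq.1.1.2, pq.1.2))
        (glueD P₀ zmap) = pmap (fun p : (G × G) × γ => (p.1.2, p.2)) P₀ :=
    pmap_glueD_fst hd.1 zmap (fun p => (p.1.2, p.2))
  have e4 : ent (pmap (fun pq : (((G × G) × γ) × ((G × G) × γ)) =>
        ((pq.2.1.1, pq.2.2), (pq.1.1.2, pq.1.2))) (glueD P₀ zmap))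
      = ent (pmap ymap (glueD P₀ zmap)) := by
    have hcongr : pmap (fun pq : (((G × G) × γ) × ((G × G) × γ)) =>
          ((pq.2.1.1, pq.2.2), (pq.1.1.2, pq.1.2))) (glueD P₀ zmap)
        = pmap (fun pq : (((G × G) × γ) × ((G × G) × γ)) =>
          ((pq.2.1.1, pq.2.2), (pq.1.1.2, pq.2.2))) (glueD P₀ zmap) := by
      refine pmap_congr_ae fun pq hne => ?_
      rw [glue_ae_snd hne]
    have hj : (fun pq : (((G × G) × γ) × ((G × G) × γ)) =>
          ((pq.2.1.1, pq.2.2), (pq.1.1.2, pq.2.2)))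
        = fun pq => jmap (ymap pq) := rfl
    rw [hcongr, hj, ← pmap_comp, ent_pmap_inj jmap_inj]
  rw [e1, e2, e3, e4] at hsub
  linarith

end BSG3

-- Part 9: the full BSG inequality
section BSG4
open Finset Real

variable {G γ : Type*} [Fintype G] [Fintype γ] [AddCommGroup G]

lemma sum_ent_alpha {P₀ : (G × G) × γ → ℝ} (hd : IsDist P₀) :
    ∑ z : G × γ, pmap zmap P₀ z * ent (pmap Prod.fst (condDist (pjoint P₀) z))
      = ent P₀ - ent (pmap zmap P₀) := by
  have hdj : IsDist (pjoint P₀) := isDist_pmap hd _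
  have h1 := sum_ent_pmap_condDist hdj Prod.fst
  rw [margSnd_pjoint] at h1
  rw [h1]
  congr 1
  rw [pjoint, pmap_comp]
  refine ent_pmap_inj ?_ P₀
  rintro ⟨⟨a, b⟩, c⟩ ⟨⟨a', b'⟩, c'⟩ h
  simp only [Prod.ext_iff] at h
  obtain ⟨ha, hab, hc⟩ := h
  have hb : b = b' := by
    have := hab
    rw [ha] at this
    exact add_left_cancel this
  simp [Prod.ext_iff, ha, hb, hc]

lemma sum_ent_beta {P₀ : (G × G) × γ → ℝ} (hd : IsDist P₀) :
    ∑ z : G × γ, pmap zmap P₀ z * ent (pmap Prod.snd (condDist (pjoint P₀) z))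
      = ent P₀ - ent (pmap zmap P₀) := by
  have hdj : IsDist (pjoint P₀) := isDist_pmap hd _
  have h1 := sum_ent_pmap_condDist hdj Prod.snd
  rw [margSnd_pjoint] at h1
  rw [h1]
  congr 1
  rw [pjoint, pmap_comp]
  refine ent_pmap_inj ?_ P₀
  rintro ⟨⟨a, b⟩, c⟩ ⟨⟨a', b'⟩, c'⟩ h
  simp only [Prod.ext_iff] at h
  obtain ⟨hb, hab, hc⟩ := h
  have ha : a = a' := by
    have := hab
    rw [hb] at this
    exact add_right_cancel this
  simp [Prod.ext_iff, ha, hb, hc]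

/-- The entropic Balog–Szemerédi–Gowers inequality, conditional form. -/
lemma bsg (hch : ∀ x : G, x + x = 0) {P₀ : (G × G) × γ → ℝ} (hd : IsDist P₀) :
    condRdist (pjoint P₀)
      ≤ 2 * ent (pmap (fun p : (G × G) × γ => (p.1.1, p.2)) P₀)
        + 2 * ent (pmap (fun p : (G × G) × γ => (p.1.2, p.2)) P₀)
        - 3 * ent (pmap (fun p : (G × G) × γ => p.2) P₀)
        - 3 * ent P₀ + 2 * ent (pmap zmap P₀) := by
  have step0 : condRdist (pjoint P₀)
      = ∑ z : G × γ, pmap zmap P₀ z * ent (cconv P₀ z)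
        - ∑ z : G × γ, pmap zmap P₀ z * ent (pmap Prod.fst (condDist (pjoint P₀) z)) / 2
        - ∑ z : G × γ, pmap zmap P₀ z * ent (pmap Prod.snd (condDist (pjoint P₀) z)) / 2 := by
    unfold condRdist rdist
    rw [margSnd_pjoint]
    rw [← Finset.sum_sub_distrib, ← Finset.sum_sub_distrib]
    refine Finset.sum_congr rfl fun z _ => ?_
    unfold cconv
    ring
  rw [step0]
  have hA := sum_ent_alpha hd
  have hB := sum_ent_beta hd
  have hmix := mix_step hd
  have hW := ent_wmap_le hch hd
  have hX := ent_xmap_le hd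
  have hY := ent_ymap_le hd
  have hsplitA : ∑ z : G × γ, pmap zmap P₀ z * ent (pmap Prod.fst (condDist (pjoint P₀) z)) / 2
      = (ent P₀ - ent (pmap zmap P₀)) / 2 := by rw [← Finset.sum_div, hA]
  have hsplitB : ∑ z : G × γ, pmap zmap P₀ z * ent (pmap Prod.snd (condDist (pjoint P₀) z)) / 2
      = (ent P₀ - ent (pmap zmap P₀)) / 2 := by rw [← Finset.sum_div, hB]
  rw [hsplitA, hsplitB]
  linarith

end BSG4

-- Part 10: generic term bound
section TermBound
open Finset Real

variable {G γ : Type*} [Fintype G] [Fintype γ] [AddCommGroup G]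

lemma term_bound {Ω : Type*} [Fintype Ω] (hch : ∀ x : G, x + x = 0)
    {μ : Ω → ℝ} (hd : IsDist μ) (A B : Ω → G) (C : Ω → γ) :
    condRdist (pmap (fun ω => ((A ω, B ω), (A ω + B ω, C ω))) μ)
      ≤ 2 * ent (pmap (fun ω => (A ω, C ω)) μ) + 2 * ent (pmap (fun ω => (B ω, C ω)) μ)
        - 3 * ent (pmap C μ) - 3 * ent (pmap (fun ω => ((A ω, B ω), C ω)) μ)
        + 2 * ent (pmap (fun ω => (A ω + B ω, C ω)) μ) := by
  have hd0 : IsDist (pmap (fun ω => ((A ω, B ω), C ω)) μ) := isDist_pmap hd _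
  have h := bsg hch hd0
  have e0 : pjoint (pmap (fun ω => ((A ω, B ω), C ω)) μ)
      = pmap (fun ω => ((A ω, B ω), (A ω + B ω, C ω))) μ := by
    unfold pjoint
    rw [pmap_comp]
  have e1 : pmap (fun p : (G × G) × γ => (p.1.1, p.2)) (pmap (fun ω => ((A ω, B ω), C ω)) μ)
      = pmap (fun ω => (A ω, C ω)) μ := by rw [pmap_comp]
  have e2 : pmap (fun p : (G × G) × γ => (p.1.2, p.2)) (pmap (fun ω => ((A ω, B ω), C ω)) μ)
      = pmap (fun ω => (B ω, C ω)) μ := by rw [pmap_comp]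
  have e3 : pmap (fun p : (G × G) × γ => p.2) (pmap (fun ω => ((A ω, B ω), C ω)) μ)
      = pmap C μ := by rw [pmap_comp]
  have e4 : pmap zmap (pmap (fun ω => ((A ω, B ω), C ω)) μ)
      = pmap (fun ω => (A ω + B ω, C ω)) μ := by rw [pmap_comp]; rfl
  rw [e0, e1, e2, e3, e4] at h
  exact h

/-- entropy invariance under the fiberwise shift `(w,s) ↦ (w+s,s)` -/
lemma ent_shift {Ω : Type*} [Fintype Ω] (μ : Ω → ℝ) (W C : Ω → G) :
    ent (pmap (fun ω => (W ω + C ω, C ω)) μ) = ent (pmap (fun ω => (W ω, C ω)) μ) := by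
  have hinj : Function.Injective (fun p : G × G => (p.1 + p.2, p.2)) := by
    rintro ⟨w, s⟩ ⟨w', s'⟩ h
    simp only [Prod.ext_iff] at h ⊢
    obtain ⟨h1, h2⟩ := h
    refine ⟨?_, h2⟩
    rw [h2] at h1
    exact add_right_cancel h1
  have h := ent_pmap_inj hinj (pmap (fun ω => (W ω, C ω)) μ)
  rw [pmap_comp] at h
  exact h

/-- entropy invariance under swapping the first two coordinates -/
lemma ent_swap12 {Ω : Type*} [Fintype Ω] (μ : Ω → ℝ) (A B : Ω → G) (C : Ω → γ) :
    ent (pmap (fun ω => ((A ω, B ω), C ω)) μ) = ent (pmap (fun ω => ((B ω, A ω), C ω)) μ) := by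
  have hinj : Function.Injective (fun p : (G × G) × γ => ((p.1.2, p.1.1), p.2)) := by
    rintro ⟨⟨a, b⟩, c⟩ ⟨⟨a', b'⟩, c'⟩ h
    simp only [Prod.ext_iff] at h ⊢
    tauto
  have h := ent_pmap_inj hinj (pmap (fun ω => ((A ω, B ω), C ω)) μ)
  rw [pmap_comp] at h
  exact h.symm

end TermBound

-- Part 11: quad-specific facts
section Quad
open Finset Real

variable {n : ℕ}

lemma f2_add_self (x : F2 n) : x + x = 0 := by
  funext i
  simp only [Pi.add_apply, Pi.zero_apply]
  exact (by decide : ∀ a : ZMod 2, a + a = 0) _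

lemma quad_Wb (q : Quad n) : Wb q = Tv q + Vv q := by
  unfold Wb Tv Vv
  funext i
  simp only [Pi.add_apply]
  exact (by decide : ∀ a c d : ZMod 2, c + d = a + c + (a + d)) _ _ _

lemma quad_Tb (q : Quad n) : Tb q = Vv q + Wv q := by
  unfold Tb Vv Wv
  funext i
  simp only [Pi.add_apply]
  exact (by decide : ∀ a b d : ZMod 2, b + d = a + d + (a + b)) _ _ _

lemma quad_Vb (q : Quad n) : Vb q = Wv q + Tv q := by
  unfold Vb Wv Tv
  funext i
  simp only [Pi.add_apply]
  exact (by decide : ∀ a b c : ZMod 2, b + c = a + b + (a + c)) _ _ _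

lemma quad_WbS (q : Quad n) : Wb q = Wv q + Sv q := by
  unfold Wb Wv Sv
  funext i
  simp only [Pi.add_apply]
  exact (by decide : ∀ a b c d : ZMod 2, c + d = a + b + (a + b + c + d)) _ _ _ _

lemma quad_TbS (q : Quad n) : Tb q = Tv q + Sv q := by
  unfold Tb Tv Sv
  funext i
  simp only [Pi.add_apply]
  exact (by decide : ∀ a b c d : ZMod 2, b + d = a + c + (a + b + c + d)) _ _ _ _

lemma quad_VbS (q : Quad n) : Vb q = Vv q + Sv q := by
  unfold Vb Vv Sv
  funext i
  simp only [Pi.add_apply]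
  exact (by decide : ∀ a b c d : ZMod 2, b + c = a + d + (a + b + c + d)) _ _ _ _

/-- swap of the two `Y`-coordinates -/
def ysw : Quad n → Quad n := fun q => (q.1, (q.2.2, q.2.1))

lemma Sv_ysw (q : Quad n) : Sv (ysw q) = Sv q := by
  unfold Sv ysw
  funext i
  simp only [Pi.add_apply]
  exact (by decide : ∀ a b c d : ZMod 2, a + b + d + c = a + b + c + d) _ _ _ _

lemma Tv_ysw (q : Quad n) : Tv (ysw q) = Vv q := rfl

lemma Wv_ysw (q : Quad n) : Wv (ysw q) = Wv q := rfl

lemma isDist_jointXY {f g : F2 n → ℝ} (hf : IsDist f) (hg : IsDist g) :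
    IsDist (jointXY f g) := by
  constructor
  · intro q
    exact mul_nonneg (mul_nonneg (mul_nonneg (hf.1 _) (hf.1 _)) (hg.1 _)) (hg.1 _)
  · have key : ∀ (u : F2 n → ℝ), ∑ p : F2 n × F2 n, u p.1 * u p.2 = (∑ x, u x) * (∑ x, u x) := by
      intro u
      rw [Finset.sum_mul_sum]
      rw [Fintype.sum_prod_type]
    have h1 : ∑ q : Quad n, jointXY f g q
        = ∑ q : Quad n, (f q.1.1 * f q.1.2) * (g q.2.1 * g q.2.2) := by
      refine Finset.sum_congr rfl fun q _ => ?_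
      unfold jointXY
      ring
    rw [h1, Fintype.sum_prod_type]
    have h2 : ∀ x y : F2 n × F2 n,
        f (x, y).1.1 * f (x, y).1.2 * (g (x, y).2.1 * g (x, y).2.2)
          = (f x.1 * f x.2) * (g y.1 * g y.2) := fun x y => rfl
    rw [Finset.sum_congr rfl fun x _ => Finset.sum_congr rfl fun y _ => h2 x y]
    rw [← Finset.sum_mul_sum, key f, key g, hf.2, hg.2]
    norm_num

lemma pmap_ysw {f g : F2 n → ℝ} : pmap ysw (jointXY f g) = jointXY f g := by
  funext q
  unfold pmap
  rw [Finset.sum_eq_single (ysw q)]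
  · rw [if_pos (show ysw (ysw q) = q from rfl)]
    show f q.1.1 * f q.1.2 * g q.2.2 * g q.2.1 = _
    unfold jointXY
    ring
  · intro q' _ hne
    refine if_neg fun h => hne ?_
    rw [← h]
    rfl
  · simp

end Quad

-- Part 12: final theorem
section Final
open Finset Real

variable {n : ℕ}

lemma ent_pmap_ysw {f g : F2 n → ℝ} {κ : Type*} [Fintype κ] (F : Quad n → κ) :
    ent (pmap (fun q => F (ysw q)) (jointXY f g)) = ent (pmap F (jointXY f g)) := by
  have h := pmap_comp F ysw (jointXY f g)
  rw [pmap_ysw] at h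
  rw [h]

theorem stmt_5' (n : ℕ) (f g : F2 n → ℝ) (hf : IsDist f) (hg : IsDist g) :
    condRdist (pmap (fun q : Quad n => ((Tv q, Vv q), (Wb q, Sv q))) (jointXY f g))
    + condRdist (pmap (fun q : Quad n => ((Vv q, Wv q), (Tb q, Sv q))) (jointXY f g))
    + condRdist (pmap (fun q : Quad n => ((Wv q, Tv q), (Vb q, Sv q))) (jointXY f g))
      ≤ 3 * I1 f g + 6 * I2 f g := by
  have hd : IsDist (jointXY f g) := isDist_jointXY hf hg
  have hch : ∀ x : F2 n, x + x = 0 := f2_add_self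
  -- rewrite the conditioning variables as sums
  have e1 : (fun q : Quad n => ((Tv q, Vv q), (Wb q, Sv q)))
      = fun q => ((Tv q, Vv q), (Tv q + Vv q, Sv q)) := funext fun q => by rw [quad_Wb q]
  have e2 : (fun q : Quad n => ((Vv q, Wv q), (Tb q, Sv q)))
      = fun q => ((Vv q, Wv q), (Vv q + Wv q, Sv q)) := funext fun q => by rw [quad_Tb q]
  have e3 : (fun q : Quad n => ((Wv q, Tv q), (Vb q, Sv q)))
      = fun q => ((Wv q, Tv q), (Wv q + Tv q, Sv q)) := funext fun q => by rw [quad_Vb q]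
  rw [e1, e2, e3]
  -- the three BSG bounds
  have b1 := term_bound hch hd Tv Vv Sv
  have b2 := term_bound hch hd Vv Wv Sv
  have b3 := term_bound hch hd Wv Tv Sv
  -- identify the sum-entropies via the fiberwise shift
  have eW : ent (pmap (fun q : Quad n => (Tv q + Vv q, Sv q)) (jointXY f g))
      = ent (pmap (fun q : Quad n => (Wv q, Sv q)) (jointXY f g)) := by
    have hfun : (fun q : Quad n => (Tv q + Vv q, Sv q))
        = fun q => (Wv q + Sv q, Sv q) := funext fun q => by rw [← quad_Wb q, quad_WbS q]
    rw [hfun]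
    exact ent_shift (jointXY f g) Wv Sv
  have eT : ent (pmap (fun q : Quad n => (Vv q + Wv q, Sv q)) (jointXY f g))
      = ent (pmap (fun q : Quad n => (Tv q, Sv q)) (jointXY f g)) := by
    have hfun : (fun q : Quad n => (Vv q + Wv q, Sv q))
        = fun q => (Tv q + Sv q, Sv q) := funext fun q => by rw [← quad_Tb q, quad_TbS q]
    rw [hfun]
    exact ent_shift (jointXY f g) Tv Sv
  have eV : ent (pmap (fun q : Quad n => (Wv q + Tv q, Sv q)) (jointXY f g))
      = ent (pmap (fun q : Quad n => (Vv q, Sv q)) (jointXY f g)) := by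
    have hfun : (fun q : Quad n => (Wv q + Tv q, Sv q))
        = fun q => (Vv q + Sv q, Sv q) := funext fun q => by rw [← quad_Vb q, quad_VbS q]
    rw [hfun]
    exact ent_shift (jointXY f g) Vv Sv
  rw [eW] at b1
  rw [eT] at b2
  rw [eV] at b3
  -- symmetry equalities
  have sV : ent (pmap (fun q : Quad n => (Vv q, Sv q)) (jointXY f g))
      = ent (pmap (fun q : Quad n => (Tv q, Sv q)) (jointXY f g)) := by
    have hfun : (fun q : Quad n => (Vv q, Sv q))
        = fun q => (Tv (ysw q), Sv (ysw q)) :=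
      funext fun q => by rw [Tv_ysw, Sv_ysw]
    rw [hfun]
    exact ent_pmap_ysw (fun q => (Tv q, Sv q))
  have sVW : ent (pmap (fun q : Quad n => ((Vv q, Wv q), Sv q)) (jointXY f g))
      = ent (pmap (fun q : Quad n => ((Tv q, Wv q), Sv q)) (jointXY f g)) := by
    have hfun : (fun q : Quad n => ((Vv q, Wv q), Sv q))
        = fun q => ((Tv (ysw q), Wv (ysw q)), Sv (ysw q)) :=
      funext fun q => by rw [Tv_ysw, Wv_ysw, Sv_ysw]
    rw [hfun]
    exact ent_pmap_ysw (fun q => ((Tv q, Wv q), Sv q))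
  have sWT : ent (pmap (fun q : Quad n => ((Wv q, Tv q), Sv q)) (jointXY f g))
      = ent (pmap (fun q : Quad n => ((Tv q, Wv q), Sv q)) (jointXY f g)) :=
    ent_swap12 (jointXY f g) Wv Tv Sv
  -- conditional mutual informations in entropy form
  have hI1 : I1 f g
      = ent (pmap (fun q : Quad n => (Tv q, Sv q)) (jointXY f g))
        + ent (pmap (fun q : Quad n => (Vv q, Sv q)) (jointXY f g))
        - ent (pmap (fun q : Quad n => ((Tv q, Vv q), Sv q)) (jointXY f g))
        - ent (pmap Sv (jointXY f g)) := by
    unfold I1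
    rw [condMutInfo_eq (isDist_pmap hd _)]
    have c1 : ent (pmap (fun p : (F2 n × F2 n) × F2 n => (p.1.1, p.2))
          (pmap (fun q : Quad n => ((Tv q, Vv q), Sv q)) (jointXY f g)))
        = ent (pmap (fun q : Quad n => (Tv q, Sv q)) (jointXY f g)) := by rw [pmap_comp]
    have c2 : ent (pmap (fun p : (F2 n × F2 n) × F2 n => (p.1.2, p.2))
          (pmap (fun q : Quad n => ((Tv q, Vv q), Sv q)) (jointXY f g)))
        = ent (pmap (fun q : Quad n => (Vv q, Sv q)) (jointXY f g)) := by rw [pmap_comp]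
    have c3 : ent (margSnd (pmap (fun q : Quad n => ((Tv q, Vv q), Sv q)) (jointXY f g)))
        = ent (pmap Sv (jointXY f g)) := by rw [margSnd_eq_pmap, pmap_comp]
    rw [c1, c2, c3]
  have hI2 : I2 f g
      = ent (pmap (fun q : Quad n => (Tv q, Sv q)) (jointXY f g))
        + ent (pmap (fun q : Quad n => (Wv q, Sv q)) (jointXY f g))
        - ent (pmap (fun q : Quad n => ((Tv q, Wv q), Sv q)) (jointXY f g))
        - ent (pmap Sv (jointXY f g)) := by
    unfold I2
    rw [condMutInfo_eq (isDist_pmap hd _)]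
    have c1 : ent (pmap (fun p : (F2 n × F2 n) × F2 n => (p.1.1, p.2))
          (pmap (fun q : Quad n => ((Tv q, Wv q), Sv q)) (jointXY f g)))
        = ent (pmap (fun q : Quad n => (Tv q, Sv q)) (jointXY f g)) := by rw [pmap_comp]
    have c2 : ent (pmap (fun p : (F2 n × F2 n) × F2 n => (p.1.2, p.2))
          (pmap (fun q : Quad n => ((Tv q, Wv q), Sv q)) (jointXY f g)))
        = ent (pmap (fun q : Quad n => (Wv q, Sv q)) (jointXY f g)) := by rw [pmap_comp]
    have c3 : ent (margSnd (pmap (fun q : Quad n => ((Tv q, Wv q), Sv q)) (jointXY f g)))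
        = ent (pmap Sv (jointXY f g)) := by rw [margSnd_eq_pmap, pmap_comp]
    rw [c1, c2, c3]
  rw [sVW] at b2
  rw [sWT] at b3
  linarith [b1, b2, b3, sV, hI1, hI2]

end Final



/-- endgame inequality:
`d[(T;V) | (W̄,S)] + d[(V;W) | (T̄,S)] + d[(W;T) | (V̄,S)] ≤ 3·I₁ + 6·I₂`. -/
theorem stmt_5 (n : ℕ) (f g : F2 n → ℝ) (hf : IsDist f) (hg : IsDist g) :
    condRdist (pmap (fun q : Quad n => ((Tv q, Vv q), (Wb q, Sv q))) (jointXY f g))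
    + condRdist (pmap (fun q : Quad n => ((Vv q, Wv q), (Tb q, Sv q))) (jointXY f g))
    + condRdist (pmap (fun q : Quad n => ((Wv q, Tv q), (Vb q, Sv q))) (jointXY f g))
      ≤ 3 * I1 f g + 6 * I2 f g := by
  exact stmt_5' n f g hf hg

end
end

section
/- Fix a nonempty finite set A ⊆ 𝔽₂ⁿ. For a linear subspace V ⊆ 𝔽₂ⁿ, τ⁺(U_V) = log₂|V| − log₂(max_{t ∈ 𝔽₂ⁿ} |A ∩ (V+t)|). -/
open scoped BigOperators Pointwise Classical

noncomputable section

/-! ### Auxiliary lemmas for `stmt_13` -/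

lemma F2.add_self' {n : ℕ} (x : F2 n) : x + x = 0 := by
  funext i; exact CharTwo.add_self_eq_zero (x i)

lemma F2.sub_eq_add' {n : ℕ} (x y : F2 n) : x - y = x + y := by
  have h : -y = y := by funext i; exact CharTwo.neg_eq (y i)
  rw [sub_eq_add_neg, h]

lemma unifSet_eq_unifFin {α : Type*} [Fintype α] (S : Set α) :
    unifSet S = unifFin S.toFinset := by
  funext x
  simp [unifSet, unifFin, Set.mem_toFinset, Nat.card_coe_set_eq,
    Set.ncard_eq_toFinset_card' S]

lemma ent_unifFin' {α : Type*} [Fintype α] (A : Finset α) (hA : A.Nonempty) :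
    ent (unifFin A) = Real.logb 2 A.card := by
  have hc : (A.card : ℝ) ≠ 0 := Nat.cast_ne_zero.2 (Finset.card_ne_zero_of_mem hA.choose_spec)
  unfold ent unifFin
  have h : ∀ x, -((if x ∈ A then (A.card:ℝ)⁻¹ else 0) * Real.logb 2 (if x ∈ A then (A.card:ℝ)⁻¹ else 0))
      = if x ∈ A then (A.card:ℝ)⁻¹ * Real.logb 2 A.card else 0 := by
    intro x; split
    · rw [Real.logb_inv]; ring
    · simp
  rw [Finset.sum_congr rfl (fun x _ => h x), Finset.sum_ite_mem, Finset.univ_inter,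
    Finset.sum_const, nsmul_eq_mul]
  field_simp

lemma isDist_unifFin' {α : Type*} [Fintype α] (A : Finset α) (hA : A.Nonempty) :
    IsDist (unifFin A) := by
  constructor
  · intro x; unfold unifFin; split <;> positivity
  · unfold unifFin
    rw [Finset.sum_ite_mem, Finset.univ_inter, Finset.sum_const, nsmul_eq_mul]
    have hc : (A.card : ℝ) ≠ 0 := Nat.cast_ne_zero.2 (Finset.card_ne_zero_of_mem hA.choose_spec)
    field_simp

lemma addDist_unifFin' {α : Type*} [Fintype α] [AddGroup α] (A : Finset α) (t : α → ℝ) (s : α) :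
    addDist (unifFin A) t s = (A.card : ℝ)⁻¹ * ∑ y ∈ A, t (s - y) := by
  unfold addDist unifFin
  rw [Finset.mul_sum]
  calc (∑ x, (if x ∈ A then (A.card:ℝ)⁻¹ else 0) * t (s - x))
      = ∑ x, (if x ∈ A then (A.card:ℝ)⁻¹ * t (s-x) else 0) := by
        apply Finset.sum_congr rfl; intro x _; split <;> simp
    _ = ∑ x ∈ A, (A.card:ℝ)⁻¹ * t (s-x) := by rw [Finset.sum_ite_mem, Finset.univ_inter]

lemma addDist_nonneg' {α : Type*} [Fintype α] [AddGroup α] {f g : α → ℝ}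
    (hf : ∀ x, 0 ≤ f x) (hg : ∀ x, 0 ≤ g x) (s : α) : 0 ≤ addDist f g s := by
  unfold addDist
  exact Finset.sum_nonneg fun x _ => mul_nonneg (hf x) (hg _)

lemma inter_eq_filter {n : ℕ} (A : Finset (F2 n)) (V : Submodule (ZMod 2) (F2 n)) (w : F2 n) :
    ((A : Set (F2 n)) ∩ (w +ᵥ (V : Set (F2 n)))) = ↑(A.filter fun a => a + w ∈ V) := by
  ext a
  simp only [Set.mem_inter_iff, Finset.coe_filter, Set.mem_setOf_eq, Finset.mem_coe,
    Set.mem_vadd_set, vadd_eq_add]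
  constructor
  · rintro ⟨hA, v, hv, rfl⟩
    refine ⟨hA, ?_⟩
    have h : w + v + w = v := by rw [add_comm w v, add_assoc, F2.add_self', add_zero]
    rw [h]; exact hv
  · rintro ⟨hA, hv⟩
    exact ⟨hA, a + w, hv, by rw [add_comm a w, ← add_assoc, F2.add_self', zero_add]⟩

lemma card_inter_eq {n : ℕ} (A : Finset (F2 n)) (V : Submodule (ZMod 2) (F2 n)) (w : F2 n) :
    Nat.card ↥((A : Set (F2 n)) ∩ (w +ᵥ (V : Set (F2 n))))
      = (A.filter fun a => a + w ∈ V).card := by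
  rw [inter_eq_filter, Nat.card_coe_set_eq, Set.ncard_coe_finset]

lemma card_filter_swap {n : ℕ} (A : Finset (F2 n)) (V : Submodule (ZMod 2) (F2 n)) (w : F2 n) :
    ((V : Set (F2 n)).toFinset.filter fun x => x + w ∈ A).card
      = (A.filter fun a => a + w ∈ V).card := by
  apply Finset.card_nbij' (i := fun x => x + w) (j := fun a => a + w)
  · intro x hx
    simp only [Finset.coe_filter, Set.mem_setOf_eq, Finset.mem_filter, Set.mem_toFinset] at hx ⊢
    exact ⟨hx.2, by rw [add_assoc, F2.add_self', add_zero]; exact hx.1⟩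
  · intro a ha
    simp only [Finset.coe_filter, Set.mem_setOf_eq, Finset.mem_filter, Set.mem_toFinset] at ha ⊢
    exact ⟨ha.2, by rw [add_assoc, F2.add_self', add_zero]; exact ha.1⟩
  · intro x _; dsimp only; rw [add_assoc, F2.add_self', add_zero]
  · intro a _; dsimp only; rw [add_assoc, F2.add_self', add_zero]

lemma natCard_V_eq {n : ℕ} (V : Submodule (ZMod 2) (F2 n)) :
    Nat.card ↥V = (V : Set (F2 n)).toFinset.card := by
  rw [show (Nat.card ↥V) = Nat.card ↥(V : Set (F2 n)) from rfl,
    Nat.card_coe_set_eq, Set.ncard_eq_toFinset_card']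

lemma sum_shift' {n : ℕ} (A : Finset (F2 n)) (t : F2 n → ℝ) (x : F2 n) :
    ∑ y ∈ A, t (x + y) = ∑ w, if x + w ∈ A then t w else 0 := by
  have h1 : ∑ y ∈ A, t (x + y) = ∑ y, if y ∈ A then t (x + y) else 0 := by
    rw [Finset.sum_ite_mem, Finset.univ_inter]
  rw [h1]
  apply Fintype.sum_bijective (fun w => x + w) ((add_right_injective x).bijective_of_finite)
  intro w
  have h2 : x + (x + w) = w := by rw [← add_assoc, F2.add_self', zero_add]
  by_cases h : x + w ∈ A <;> simp [h, h2]

lemma key_bound' {n : ℕ} (A : Finset (F2 n)) (hA : A.Nonempty)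
    (V : Submodule (ZMod 2) (F2 n)) (t : F2 n → ℝ) (ht : IsDist t) :
    ∑ x ∈ (V : Set (F2 n)).toFinset, addDist (unifFin A) t x
      ≤ ((Finset.univ.sup fun w : F2 n =>
          Nat.card ↥((A : Set (F2 n)) ∩ (w +ᵥ (V : Set (F2 n)))) : ℕ) : ℝ) / A.card := by
  set VF := (V : Set (F2 n)).toFinset
  set M : ℕ := Finset.univ.sup fun w : F2 n =>
    Nat.card ↥((A : Set (F2 n)) ∩ (w +ᵥ (V : Set (F2 n)))) with hM
  have ha : (0:ℝ) < A.card := by exact_mod_cast Finset.card_pos.2 hA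
  have step1 : ∑ x ∈ VF, addDist (unifFin A) t x
      = (A.card : ℝ)⁻¹ * ∑ w, ((VF.filter fun x => x + w ∈ A).card : ℝ) * t w := by
    calc ∑ x ∈ VF, addDist (unifFin A) t x
        = ∑ x ∈ VF, (A.card:ℝ)⁻¹ * ∑ y ∈ A, t (x + y) := by
          apply Finset.sum_congr rfl; intro x _
          rw [addDist_unifFin']
          congr 1; apply Finset.sum_congr rfl; intro y _; rw [F2.sub_eq_add']
      _ = (A.card:ℝ)⁻¹ * ∑ x ∈ VF, ∑ w, (if x + w ∈ A then t w else 0) := by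
          rw [Finset.mul_sum]; apply Finset.sum_congr rfl; intro x _; rw [sum_shift']
      _ = (A.card:ℝ)⁻¹ * ∑ w, ∑ x ∈ VF, (if x + w ∈ A then t w else 0) := by
          rw [Finset.sum_comm]
      _ = (A.card:ℝ)⁻¹ * ∑ w, ((VF.filter fun x => x + w ∈ A).card : ℝ) * t w := by
          congr 1; apply Finset.sum_congr rfl; intro w _
          rw [← Finset.sum_filter, Finset.sum_const, nsmul_eq_mul]
  rw [step1, div_eq_inv_mul]
  apply mul_le_mul_of_nonneg_left _ (by positivity)
  calc ∑ w, ((VF.filter fun x => x + w ∈ A).card : ℝ) * t w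
      ≤ ∑ w, (M : ℝ) * t w := by
        apply Finset.sum_le_sum; intro w _
        apply mul_le_mul_of_nonneg_right _ (ht.1 w)
        have hcard : (VF.filter fun x => x + w ∈ A).card ≤ M := by
          rw [card_filter_swap, ← card_inter_eq]
          exact Finset.le_sup (f := fun w : F2 n => Nat.card ↥((A : Set (F2 n)) ∩ (w +ᵥ (V : Set (F2 n))))) (Finset.mem_univ w)
        exact_mod_cast hcard
    _ = M := by rw [← Finset.mul_sum, ht.2, mul_one]

lemma jensen_aux {a m N : ℝ} (ha : 0 < a) (hm : 0 < m) (hN : 0 < N)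
    {ι : Type*} (s : Finset ι) (hcard : (s.card : ℝ) = N) (g : ι → ℝ)
    (hg : ∀ x ∈ s, 0 < g x) (hsum : ∑ x ∈ s, g x ≤ m / a) :
    Real.logb 2 a - Real.logb 2 m ≤ ∑ x ∈ s, N⁻¹ * Real.logb 2 (N⁻¹ / g x) := by
  have hL2 : (0:ℝ) < Real.log 2 := Real.log_pos one_lt_two
  have hpt : ∀ x ∈ s,
      N⁻¹ * (Real.logb 2 a - Real.logb 2 m) - (a / m * g x - N⁻¹) / Real.log 2
        ≤ N⁻¹ * Real.logb 2 (N⁻¹ / g x) := by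
    intro x hx
    have hgx := hg x hx
    set r : ℝ := N * a * g x / m with hr
    have hrpos : 0 < r := by positivity
    have e1 : Real.log (N⁻¹ / g x) = -(Real.log N) - Real.log (g x) := by
      rw [Real.log_div (inv_ne_zero hN.ne') hgx.ne', Real.log_inv]
    have e2 : Real.log r = Real.log N + Real.log a + Real.log (g x) - Real.log m := by
      rw [hr, Real.log_div (by positivity) hm.ne', Real.log_mul (by positivity) hgx.ne',
        Real.log_mul hN.ne' ha.ne']
    have e3 : Real.log r ≤ r - 1 := Real.log_le_sub_one_of_pos hrpos
    have key : Real.log a - Real.log m - (r - 1) ≤ Real.log (N⁻¹ / g x) := by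
      rw [e1]; linarith [e2, e3]
    have expand : N⁻¹ * (Real.logb 2 a - Real.logb 2 m) - (a / m * g x - N⁻¹) / Real.log 2
        = N⁻¹ / Real.log 2 * (Real.log a - Real.log m - (r - 1)) := by
      unfold Real.logb
      rw [hr]
      field_simp
    have expand2 : N⁻¹ * Real.logb 2 (N⁻¹ / g x)
        = N⁻¹ / Real.log 2 * Real.log (N⁻¹ / g x) := by
      unfold Real.logb; ring
    rw [expand, expand2]
    exact mul_le_mul_of_nonneg_left key (by positivity)
  calc Real.logb 2 a - Real.logb 2 m
      = ∑ x ∈ s, (N⁻¹ * (Real.logb 2 a - Real.logb 2 m) - (a / m * g x - N⁻¹) / Real.log 2)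
        + ((a / m * ∑ x ∈ s, g x) - 1) / Real.log 2 := by
        rw [Finset.sum_sub_distrib, Finset.sum_const, nsmul_eq_mul, hcard]
        rw [show ∑ x ∈ s, (a / m * g x - N⁻¹) / Real.log 2
            = ((a / m * ∑ x ∈ s, g x) - N * N⁻¹) / Real.log 2 by
          rw [← Finset.sum_div, Finset.sum_sub_distrib, ← Finset.mul_sum,
            Finset.sum_const, nsmul_eq_mul, hcard]]
        rw [mul_inv_cancel₀ hN.ne']
        field_simp
        ring
    _ ≤ ∑ x ∈ s, (N⁻¹ * (Real.logb 2 a - Real.logb 2 m) - (a / m * g x - N⁻¹) / Real.log 2) := by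
        have h1 : a / m * ∑ x ∈ s, g x ≤ 1 := by
          calc a / m * ∑ x ∈ s, g x ≤ a / m * (m / a) :=
            mul_le_mul_of_nonneg_left hsum (by positivity)
          _ = 1 := by field_simp
        have h2 : ((a / m * ∑ x ∈ s, g x) - 1) / Real.log 2 ≤ 0 :=
          div_nonpos_of_nonpos_of_nonneg (by linarith) hL2.le
        linarith
    _ ≤ ∑ x ∈ s, N⁻¹ * Real.logb 2 (N⁻¹ / g x) := Finset.sum_le_sum hpt

lemma M_pos {n : ℕ} (A : Finset (F2 n)) (hA : A.Nonempty)
    (V : Submodule (ZMod 2) (F2 n)) :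
    0 < (Finset.univ.sup fun w : F2 n =>
        Nat.card ↥((A : Set (F2 n)) ∩ (w +ᵥ (V : Set (F2 n)))) : ℕ) := by
  obtain ⟨a, haA⟩ := hA
  have h : 0 < Nat.card ↥((A : Set (F2 n)) ∩ (a +ᵥ (V : Set (F2 n)))) := by
    refine Nat.card_pos_iff.2 ⟨⟨⟨a, ?_⟩⟩, Set.Finite.to_subtype (Set.toFinite _)⟩
    refine ⟨haA, ?_⟩
    rw [Set.mem_vadd_set]
    exact ⟨0, V.zero_mem, by simp⟩
  calc 0 < Nat.card ↥((A : Set (F2 n)) ∩ (a +ᵥ (V : Set (F2 n)))) := h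
    _ ≤ _ := Finset.le_sup (f := fun w : F2 n =>
        Nat.card ↥((A : Set (F2 n)) ∩ (w +ᵥ (V : Set (F2 n))))) (Finset.mem_univ a)

lemma KL_lower {n : ℕ} (A : Finset (F2 n)) (hA : A.Nonempty)
    (V : Submodule (ZMod 2) (F2 n)) (t : F2 n → ℝ) (ht : IsDist t) :
    ((Real.logb 2 A.card
        - Real.logb 2 ((Finset.univ.sup fun w : F2 n =>
            Nat.card ↥((A : Set (F2 n)) ∩ (w +ᵥ (V : Set (F2 n)))) : ℕ) : ℝ) : ℝ) : EReal)
      ≤ KL (unifSet (V : Set (F2 n))) (addDist (unifFin A) t) := by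
  classical
  set VF := (V : Set (F2 n)).toFinset with hVF
  set M : ℕ := Finset.univ.sup fun w : F2 n =>
    Nat.card ↥((A : Set (F2 n)) ∩ (w +ᵥ (V : Set (F2 n))))
  set g := addDist (unifFin A) t with hg
  set f := unifSet (V : Set (F2 n)) with hf
  have hfF : f = unifFin VF := by rw [hf, unifSet_eq_unifFin]
  have hVne : (0:F2 n) ∈ VF := by rw [hVF, Set.mem_toFinset]; exact V.zero_mem
  have hN : (0:ℝ) < VF.card := by exact_mod_cast Finset.card_pos.2 ⟨0, hVne⟩
  have ha : (0:ℝ) < A.card := by exact_mod_cast Finset.card_pos.2 hA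
  have hM : (0:ℝ) < M := by exact_mod_cast M_pos A hA V
  unfold KL
  split
  case isFalse => exact le_top
  case isTrue hc =>
    rw [EReal.coe_le_coe_iff]
    set N : ℝ := (VF.card : ℝ)
    have hgpos : ∀ x ∈ VF, 0 < g x := by
      intro x hx
      have hge : 0 ≤ g x := addDist_nonneg' (fun y => (isDist_unifFin' A hA).1 y) ht.1 x
      rcases hge.lt_or_eq with h | h
      · exact h
      · exfalso
        have h2 := hc x h.symm
        rw [hfF] at h2
        simp only [unifFin, if_pos hx] at h2
        exact (inv_ne_zero hN.ne') h2
    have hsum : ∑ x, f x * Real.logb 2 (f x / g x)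
        = ∑ x ∈ VF, N⁻¹ * Real.logb 2 (N⁻¹ / g x) := by
      rw [hfF]
      calc ∑ x, unifFin VF x * Real.logb 2 (unifFin VF x / g x)
          = ∑ x, if x ∈ VF then N⁻¹ * Real.logb 2 (N⁻¹ / g x) else 0 := by
            apply Finset.sum_congr rfl; intro x _
            unfold unifFin; split <;> simp [N]
        _ = ∑ x ∈ VF, N⁻¹ * Real.logb 2 (N⁻¹ / g x) := by
            rw [Finset.sum_ite_mem, Finset.univ_inter]
    rw [hsum]
    exact jensen_aux ha hM hN VF rfl g hgpos (key_bound' A hA V t ht)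

lemma F2.neg_eq' {n : ℕ} (x : F2 n) : -x = x := by
  funext i; exact CharTwo.neg_eq (x i)

lemma KL_witness {n : ℕ} (A : Finset (F2 n)) (hA : A.Nonempty)
    (V : Submodule (ZMod 2) (F2 n)) (t0 : F2 n)
    (ht0 : (Finset.univ.sup fun w : F2 n =>
        Nat.card ↥((A : Set (F2 n)) ∩ (w +ᵥ (V : Set (F2 n)))) : ℕ)
      = Nat.card ↥((A : Set (F2 n)) ∩ (t0 +ᵥ (V : Set (F2 n))))) :
    KL (unifSet (V : Set (F2 n)))
        (addDist (unifFin A) (unifFin ((V : Set (F2 n)).toFinset.image (fun v => v + t0))))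
      = ((Real.logb 2 A.card
          - Real.logb 2 ((Finset.univ.sup fun w : F2 n =>
              Nat.card ↥((A : Set (F2 n)) ∩ (w +ᵥ (V : Set (F2 n)))) : ℕ) : ℝ) : ℝ) : EReal) := by
  classical
  set VF := (V : Set (F2 n)).toFinset with hVF
  set VF' := VF.image (fun v => v + t0) with hVF'
  set M : ℕ := Finset.univ.sup fun w : F2 n =>
    Nat.card ↥((A : Set (F2 n)) ∩ (w +ᵥ (V : Set (F2 n)))) with hMdef
  have hVne : (0:F2 n) ∈ VF := by rw [hVF, Set.mem_toFinset]; exact V.zero_mem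
  have hN : (0:ℝ) < VF.card := by exact_mod_cast Finset.card_pos.2 ⟨0, hVne⟩
  have ha : (0:ℝ) < A.card := by exact_mod_cast Finset.card_pos.2 hA
  have hM : (0:ℝ) < M := by exact_mod_cast M_pos A hA V
  have hcard' : VF'.card = VF.card :=
    Finset.card_image_of_injective _ (add_left_injective t0)
  set N : ℝ := (VF.card : ℝ) with hNdef
  set g := addDist (unifFin A) (unifFin VF') with hg
  -- value of g on V
  have hgval : ∀ x ∈ VF, g x = (A.card : ℝ)⁻¹ * (N⁻¹ * M) := by
    intro x hx
    have hxV : x ∈ V := by rwa [hVF, Set.mem_toFinset] at hx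
    have hiff : ∀ y : F2 n, x + y ∈ VF' ↔ y + t0 ∈ V := by
      intro y
      rw [hVF', Finset.mem_image]
      constructor
      · rintro ⟨v, hv, hvt⟩
        have hv' : v ∈ V := by rwa [hVF, Set.mem_toFinset] at hv
        have comm : (y + t0) + (x + v) = (v + t0) + (x + y) := by abel
        have h0 : (y + t0) + (x + v) = 0 := by
          rw [comm, hvt]; exact F2.add_self' _
        have heq : y + t0 = x + v := by
          have h1 := add_eq_zero_iff_eq_neg.mp h0
          rwa [F2.neg_eq'] at h1
        rw [heq]; exact V.add_mem hxV hv'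
      · intro hy
        refine ⟨x + (y + t0), ?_, ?_⟩
        · rw [hVF, Set.mem_toFinset]; exact V.add_mem hxV hy
        · rw [add_assoc, add_assoc, F2.add_self', add_zero]
    rw [hg, addDist_unifFin']
    congr 1
    calc ∑ y ∈ A, unifFin VF' (x - y)
        = ∑ y ∈ A, (if y + t0 ∈ V then (N⁻¹ : ℝ) else 0) := by
          apply Finset.sum_congr rfl; intro y _
          rw [F2.sub_eq_add', unifFin, hcard']
          by_cases h : y + t0 ∈ V
          · rw [if_pos ((hiff y).2 h), if_pos h]
          · rw [if_neg (fun hc => h ((hiff y).1 hc)), if_neg h]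
      _ = ((A.filter fun y => y + t0 ∈ V).card : ℝ) * N⁻¹ := by
          rw [← Finset.sum_filter, Finset.sum_const, nsmul_eq_mul]
      _ = N⁻¹ * M := by
          rw [← card_inter_eq, ← ht0]; ring
  -- the support condition
  have hcond : ∀ x, g x = 0 → unifSet (V : Set (F2 n)) x = 0 := by
    intro x hx
    rw [unifSet_eq_unifFin, ← hVF, unifFin]
    split
    case isTrue hmem =>
      exfalso
      rw [hgval x hmem] at hx
      have : (A.card : ℝ)⁻¹ * (N⁻¹ * M) ≠ 0 := by positivity
      exact this hx
    case isFalse => rfl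
  rw [KL, if_pos hcond]
  congr 1
  have hval : N⁻¹ / ((A.card : ℝ)⁻¹ * (N⁻¹ * M)) = A.card / M := by
    field_simp
  calc ∑ x, unifSet (V : Set (F2 n)) x * Real.logb 2 (unifSet (V : Set (F2 n)) x / g x)
      = ∑ x, (if x ∈ VF then N⁻¹ * Real.logb 2 (A.card / M) else 0) := by
        apply Finset.sum_congr rfl; intro x _
        rw [unifSet_eq_unifFin, ← hVF, unifFin]
        by_cases h : x ∈ VF
        · rw [if_pos h, if_pos h, hgval x h, hval]
        · rw [if_neg h, if_neg h, zero_mul]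
    _ = VF.card • (N⁻¹ * Real.logb 2 (A.card / M)) := by
        rw [Finset.sum_ite_mem, Finset.univ_inter, Finset.sum_const]
    _ = Real.logb 2 A.card - Real.logb 2 M := by
        rw [nsmul_eq_mul, ← hNdef, ← mul_assoc, mul_inv_cancel₀ hN.ne', one_mul,
          Real.logb_div ha.ne' hM.ne']

/-- for a nonempty finite `A ⊆ 𝔽₂ⁿ` and a linear subspace `V`,
`τ⁺(U_V) = log₂|V| − log₂(max_t |A ∩ (V+t)|)`. -/
theorem stmt_13 (n : ℕ) (A : Finset (F2 n)) (hA : A.Nonempty)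
    (V : Submodule (ZMod 2) (F2 n)) :
    tauPlus A (unifSet (V : Set (F2 n)))
      = ((Real.logb 2 (Nat.card V : ℝ)
          - Real.logb 2 ((Finset.univ.sup fun t : F2 n =>
              Nat.card ↥((A : Set (F2 n)) ∩ (t +ᵥ (V : Set (F2 n)))) : ℕ) : ℝ) : ℝ)
        : EReal) := by
  classical
  set VF := (V : Set (F2 n)).toFinset with hVF
  set M : ℕ := Finset.univ.sup fun w : F2 n =>
    Nat.card ↥((A : Set (F2 n)) ∩ (w +ᵥ (V : Set (F2 n)))) with hMdef
  have hVFne : VF.Nonempty := ⟨0, by rw [hVF, Set.mem_toFinset]; exact V.zero_mem⟩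
  obtain ⟨t0, -, ht0⟩ := Finset.exists_mem_eq_sup Finset.univ ⟨0, Finset.mem_univ 0⟩
    (fun w : F2 n => Nat.card ↥((A : Set (F2 n)) ∩ (w +ᵥ (V : Set (F2 n)))))
  have htm : tauMinus A (unifSet (V : Set (F2 n)))
      = ((Real.logb 2 A.card - Real.logb 2 (M : ℝ) : ℝ) : EReal) := by
    apply le_antisymm
    · refine iInf_le_of_le
        ⟨unifFin (VF.image (fun v => v + t0)),
          isDist_unifFin' _ (hVFne.image _)⟩ (le_of_eq ?_)
      exact KL_witness A hA V t0 ht0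
    · exact le_iInf fun t => KL_lower A hA V t.1 t.2
  rw [tauPlus, htm, unifSet_eq_unifFin, ent_unifFin' A hA, ent_unifFin' _ hVFne,
    ← EReal.coe_add]
  rw [EReal.coe_eq_coe_iff]
  rw [natCard_V_eq V]
  ring

end
end
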